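/- arXiv:1512.02195 — 4 statements merged into one kernel-verified Lean document; each statement's English description precedes it below -/
import Mathlib

section
/- Let α ∈ (0,1) be irrational with sequence of continued-fraction denominators (q_n). For every 𝒜 > 1 there exists an (𝒜, 𝒜³, 𝒜²¹, 𝒜²⁰)-admissible subsequence (Q_k) of (q_n) with Q₀ = 1. -/
noncomputable section

/-- The Gauss-map iterates `α_k` of the continued fraction algorithm: `α₀ = α`,
`α_{k+1} = {α_k⁻¹}`. -/
def cfAlpha (α : ℝ) : ℕ → ℝ
  | 0 => α
  | n + 1 => Int.fract (cfAlpha α n)⁻¹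

/-- The partial quotients: `cfa α n = a_{n+1} = ⌊α_n⁻¹⌋`. -/
def cfa (α : ℝ) (n : ℕ) : ℕ := (⌊(cfAlpha α n)⁻¹⌋).toNat

/-- The denominators `q_n` of the best rational approximations of `α`:
`q₀ = 1`, `q₁ = a₁`, `q_{k+1} = a_{k+1} q_k + q_{k-1}`. -/
def cfDen (α : ℝ) : ℕ → ℕ
  | 0 => 1
  | 1 => cfa α 0
  | n + 2 => cfa α (n + 1) * cfDen α (n + 1) + cfDen α n

/-- The pair of denominators `(q_l, q_n)`, `1 ≤ l < n`, forms a `CD(𝒜, ℬ, 𝒞)` bridge. -/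
def CDBridge (α : ℝ) (𝒜 ℬ 𝒞 : ℝ) (l n : ℕ) : Prop :=
  1 ≤ l ∧ l < n ∧
  (∀ i, l ≤ i → i < n → (cfDen α (i + 1) : ℝ) ≤ (cfDen α i : ℝ) ^ 𝒜) ∧
  (cfDen α n : ℝ) ≤ (cfDen α l : ℝ) ^ 𝒞 ∧ (cfDen α l : ℝ) ^ ℬ ≤ (cfDen α n : ℝ)

/-- The subsequence `Q_k = q_{m k}` of denominators (with `Q̄_k = q_{m k + 1}`) is
`(𝒜, ℬ, 𝒞, 𝒟)`-admissible: `m` is strictly monotone and for every `k ≥ 1`,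
`Q_k ≤ Q̄_{k-1}^𝒟` and either `Q̄_k > Q_k^𝒜` or both `(Q̄_{k-1}, Q_k)` and `(Q_k, Q_{k+1})`
are `CD(𝒜, ℬ, 𝒞)` bridges. -/
def Admissible (α : ℝ) (𝒜 ℬ 𝒞 𝒟 : ℝ) (m : ℕ → ℕ) : Prop :=
  StrictMono m ∧
  ∀ j : ℕ,
    (cfDen α (m (j + 1)) : ℝ) ≤ (cfDen α (m j + 1) : ℝ) ^ 𝒟 ∧
    ((cfDen α (m (j + 1) + 1) : ℝ) > (cfDen α (m (j + 1)) : ℝ) ^ 𝒜 ∨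
      (CDBridge α 𝒜 ℬ 𝒞 (m j + 1) (m (j + 1)) ∧
       CDBridge α 𝒜 ℬ 𝒞 (m (j + 1)) (m (j + 2))))

namespace AdmissibleAux

variable (α 𝒜 : ℝ)

/-- `i` is a jump index: `q_{i+1} > q_i ^ 𝒜`. -/
def Jmp (i : ℕ) : Prop := ((cfDen α i : ℝ)) ^ 𝒜 < (cfDen α (i + 1) : ℝ)

open scoped Classical in
/-- The next index of the admissible subsequence after `n`. -/
def nxt (n : ℕ) : ℕ :=
  if h : ∃ J, n + 1 ≤ J ∧ Jmp α 𝒜 J ∧ (cfDen α J : ℝ) ≤ (cfDen α (n + 1) : ℝ) ^ (𝒜 ^ 20)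
  then Nat.find h
  else if h2 : ∃ N, n + 1 ≤ N ∧ (cfDen α (n + 1) : ℝ) ^ (𝒜 ^ 3) ≤ (cfDen α N : ℝ)
  then Nat.find h2 else 0

variable {α 𝒜}

lemma cfAlpha_mem (h0 : 0 < α) (h1 : α < 1) (hα : Irrational α) :
    ∀ n, Irrational (cfAlpha α n) ∧ 0 < cfAlpha α n ∧ cfAlpha α n < 1 := by
  intro n
  induction n with
  | zero => exact ⟨hα, h0, h1⟩
  | succ n ih =>
    obtain ⟨hi, hp, hl⟩ := ih
    have hinv : Irrational (cfAlpha α n)⁻¹ := hi.inv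
    have hirr : Irrational (cfAlpha α (n + 1)) := by
      show Irrational (Int.fract (cfAlpha α n)⁻¹)
      unfold Int.fract
      exact hinv.sub_intCast _
    refine ⟨hirr, ?_, ?_⟩
    · rcases lt_or_ge 0 (Int.fract (cfAlpha α n)⁻¹) with h | h
      · exact h
      · exfalso
        have := Int.fract_nonneg (cfAlpha α n)⁻¹
        have hz : Int.fract (cfAlpha α n)⁻¹ = 0 := le_antisymm h this
        have : Irrational (0 : ℝ) := hz ▸ hirr
        exact this.ne_int 0 (by norm_num)
    · exact Int.fract_lt_one _

lemma one_le_cfa (h0 : 0 < α) (h1 : α < 1) (hα : Irrational α) (n : ℕ) :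
    1 ≤ cfa α n := by
  obtain ⟨_, hp, hl⟩ := cfAlpha_mem h0 h1 hα n
  have : (1 : ℝ) ≤ (cfAlpha α n)⁻¹ := by
    rw [le_inv_comm₀] <;> simp [hp, hl.le]
  have : (1 : ℤ) ≤ ⌊(cfAlpha α n)⁻¹⌋ := Int.le_floor.mpr (by exact_mod_cast this)
  unfold cfa
  omega

lemma one_le_q (h0 : 0 < α) (h1 : α < 1) (hα : Irrational α) :
    ∀ n, 1 ≤ cfDen α n := by
  intro n
  induction n using Nat.strong_induction_on with
  | _ n ih =>
    match n with
    | 0 => simp [cfDen]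
    | 1 => simpa [cfDen] using one_le_cfa h0 h1 hα 0
    | n + 2 =>
      have h1' := ih (n + 1) (by omega)
      have ha := one_le_cfa h0 h1 hα (n + 1)
      have : 1 * 1 ≤ cfa α (n + 1) * cfDen α (n + 1) := Nat.mul_le_mul ha h1'
      show 1 ≤ cfa α (n + 1) * cfDen α (n + 1) + cfDen α n
      omega

lemma q_mono (h0 : 0 < α) (h1 : α < 1) (hα : Irrational α) :
    Monotone (cfDen α) := by
  apply monotone_nat_of_le_succ
  intro n
  match n with
  | 0 => simpa [cfDen] using one_le_cfa h0 h1 hα 0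
  | n + 1 =>
    have ha := one_le_cfa h0 h1 hα (n + 1)
    have h1' := one_le_q h0 h1 hα (n + 1)
    show cfDen α (n + 1) ≤ cfa α (n + 1) * cfDen α (n + 1) + cfDen α n
    nlinarith

lemma two_le_q (h0 : 0 < α) (h1 : α < 1) (hα : Irrational α) (n : ℕ) :
    2 ≤ cfDen α (n + 2) := by
  have ha := one_le_cfa h0 h1 hα (n + 1)
  have h1' := one_le_q h0 h1 hα (n + 1)
  have h2' := one_le_q h0 h1 hα n
  show 2 ≤ cfa α (n + 1) * cfDen α (n + 1) + cfDen α n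
  nlinarith

lemma exists_big (h0 : 0 < α) (h1 : α < 1) (hα : Irrational α) (l : ℕ) (C : ℝ) :
    ∃ N, l ≤ N ∧ C ≤ (cfDen α N : ℝ) := by
  have key : ∀ k : ℕ, k + 1 ≤ cfDen α (2 * k) := by
    intro k
    induction k with
    | zero => simp [cfDen]
    | succ k ih =>
      have ha := one_le_cfa h0 h1 hα (2 * k + 1)
      have h1' := one_le_q h0 h1 hα (2 * k + 1)
      have : cfDen α (2 * (k + 1)) = cfa α (2 * k + 1) * cfDen α (2 * k + 1) + cfDen α (2 * k) := by
        show cfDen α (2 * k + 2) = _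
        rfl
      rw [this]
      nlinarith
  refine ⟨2 * max l ⌈C⌉₊, by omega, ?_⟩
  have h1' := key (max l ⌈C⌉₊)
  have : C ≤ (⌈C⌉₊ : ℝ) := Nat.le_ceil C
  have h2' : (⌈C⌉₊ : ℝ) ≤ (cfDen α (2 * max l ⌈C⌉₊) : ℝ) := by
    exact_mod_cast le_trans (by omega : ⌈C⌉₊ ≤ max l ⌈C⌉₊ + 1) h1'
  linarith

lemma rpow_pow_pow {x : ℝ} (hx : 0 ≤ x) (j k : ℕ) :
    (x ^ (𝒜 ^ j)) ^ (𝒜 ^ k) = x ^ (𝒜 ^ (j + k)) := by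
  rw [← Real.rpow_mul hx, ← pow_add]

open scoped Classical in
lemma nxt_specA (n : ℕ)
    (hA : ∃ J, n + 1 ≤ J ∧ Jmp α 𝒜 J ∧
      (cfDen α J : ℝ) ≤ (cfDen α (n + 1) : ℝ) ^ (𝒜 ^ 20)) :
    n + 1 ≤ nxt α 𝒜 n ∧ Jmp α 𝒜 (nxt α 𝒜 n) ∧
      (cfDen α (nxt α 𝒜 n) : ℝ) ≤ (cfDen α (n + 1) : ℝ) ^ (𝒜 ^ 20) ∧
      ∀ i, i < nxt α 𝒜 n →
        ¬(n + 1 ≤ i ∧ Jmp α 𝒜 i ∧ (cfDen α i : ℝ) ≤ (cfDen α (n + 1) : ℝ) ^ (𝒜 ^ 20)) := by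
  unfold nxt
  rw [dif_pos hA]
  obtain ⟨h1, h2, h3⟩ := Nat.find_spec hA
  exact ⟨h1, h2, h3, fun i hi => Nat.find_min hA hi⟩

open scoped Classical in
lemma nxt_specB (h0 : 0 < α) (h1 : α < 1) (hα : Irrational α) (n : ℕ)
    (hB : ∀ J, n + 1 ≤ J → Jmp α 𝒜 J →
      (cfDen α (n + 1) : ℝ) ^ (𝒜 ^ 20) < (cfDen α J : ℝ)) :
    n + 1 ≤ nxt α 𝒜 n ∧
      (cfDen α (n + 1) : ℝ) ^ (𝒜 ^ 3) ≤ (cfDen α (nxt α 𝒜 n) : ℝ) ∧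
      ∀ i, n + 1 ≤ i → i < nxt α 𝒜 n →
        (cfDen α i : ℝ) < (cfDen α (n + 1) : ℝ) ^ (𝒜 ^ 3) := by
  have hA' : ¬ ∃ J, n + 1 ≤ J ∧ Jmp α 𝒜 J ∧
      (cfDen α J : ℝ) ≤ (cfDen α (n + 1) : ℝ) ^ (𝒜 ^ 20) := by
    rintro ⟨J, hJ1, hJ2, hJ3⟩
    exact absurd hJ3 (not_le.mpr (hB J hJ1 hJ2))
  have h2 : ∃ N, n + 1 ≤ N ∧ (cfDen α (n + 1) : ℝ) ^ (𝒜 ^ 3) ≤ (cfDen α N : ℝ) :=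
    exists_big h0 h1 hα (n + 1) _
  unfold nxt
  rw [dif_neg hA', dif_pos h2]
  obtain ⟨ha, hb⟩ := Nat.find_spec h2
  refine ⟨ha, hb, fun i hi1 hi2 => ?_⟩
  have := Nat.find_min h2 hi2
  push_neg at this
  exact this hi1



lemma caseB_facts (h0 : 0 < α) (h1 : α < 1) (hα : Irrational α) (h𝒜 : 1 < 𝒜) (n : ℕ)
    (hB : ∀ J, n + 1 ≤ J → Jmp α 𝒜 J →
      (cfDen α (n + 1) : ℝ) ^ (𝒜 ^ 20) < (cfDen α J : ℝ)) :
    2 ≤ cfDen α (n + 1) ∧ n + 1 < nxt α 𝒜 n ∧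
      (∀ i, n + 1 ≤ i → i < nxt α 𝒜 n →
        (cfDen α (i + 1) : ℝ) ≤ (cfDen α i : ℝ) ^ 𝒜) ∧
      (cfDen α (nxt α 𝒜 n) : ℝ) ≤ (cfDen α (n + 1) : ℝ) ^ (𝒜 ^ 4) ∧
      ¬ Jmp α 𝒜 (nxt α 𝒜 n) ∧
      (cfDen α (n + 1) : ℝ) ^ (𝒜 ^ 3) ≤ (cfDen α (nxt α 𝒜 n) : ℝ) := by
  obtain ⟨hlN, hbig, hmin⟩ := nxt_specB h0 h1 hα n hB
  set N := nxt α 𝒜 n with hNdef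
  have hq1 := one_le_q h0 h1 hα
  have hc1 : ∀ k, (1 : ℝ) ≤ (cfDen α k : ℝ) := fun k => by exact_mod_cast hq1 k
  have h𝒜0 : (0 : ℝ) ≤ 𝒜 := by linarith
  have h2l : 2 ≤ cfDen α (n + 1) := by
    by_contra hcon
    have hql : cfDen α (n + 1) = 1 := by have := hq1 (n + 1); omega
    have h2 : 2 ≤ cfDen α (n + 2) := two_le_q h0 h1 hα n
    have hj : Jmp α 𝒜 (n + 1) := by
      show ((cfDen α (n + 1) : ℝ)) ^ 𝒜 < (cfDen α (n + 2) : ℝ)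
      rw [hql]
      push_cast
      rw [Real.one_rpow]
      have : (1 : ℕ) < cfDen α (n + 2) := by omega
      exact_mod_cast this
    have hcon2 := hB (n + 1) le_rfl hj
    rw [hql] at hcon2
    push_cast at hcon2
    rw [Real.one_rpow] at hcon2
    exact lt_irrefl _ hcon2
  have hc2 : (2 : ℝ) ≤ (cfDen α (n + 1) : ℝ) := by exact_mod_cast h2l
  have hlt : n + 1 < N := by
    rcases eq_or_lt_of_le hlN with heq | hlt
    · exfalso
      have e1 : (cfDen α (n + 1) : ℝ) < (cfDen α (n + 1) : ℝ) ^ (𝒜 ^ 3) := by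
        nth_rewrite 1 [← Real.rpow_one (cfDen α (n + 1) : ℝ)]
        exact Real.rpow_lt_rpow_of_exponent_lt (by linarith)
          (one_lt_pow₀ h𝒜 (by norm_num))
      rw [← heq] at hbig
      linarith
    · exact hlt
  have hnoj : ∀ i, n + 1 ≤ i → i < N → ¬ Jmp α 𝒜 i := by
    intro i hi1 hi2 hj
    have t1 := hB i hi1 hj
    have t2 := hmin i hi1 hi2
    have t3 : (cfDen α (n + 1) : ℝ) ^ (𝒜 ^ 3) ≤ (cfDen α (n + 1) : ℝ) ^ (𝒜 ^ 20) :=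
      Real.rpow_le_rpow_of_exponent_le (hc1 _) (pow_le_pow_right₀ h𝒜.le (by norm_num))
    linarith
  have hstep : ∀ i, n + 1 ≤ i → i < N →
      (cfDen α (i + 1) : ℝ) ≤ (cfDen α i : ℝ) ^ 𝒜 := by
    intro i hi1 hi2
    have := hnoj i hi1 hi2
    simp only [Jmp, not_lt] at this
    exact this
  have hup : (cfDen α N : ℝ) ≤ (cfDen α (n + 1) : ℝ) ^ (𝒜 ^ 4) := by
    obtain ⟨M, hM⟩ : ∃ M, N = M + 1 := ⟨N - 1, by omega⟩
    have hM1 : n + 1 ≤ M := by omega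
    have s1 : (cfDen α (M + 1) : ℝ) ≤ (cfDen α M : ℝ) ^ 𝒜 := hstep M hM1 (by omega)
    have s2 : (cfDen α M : ℝ) ≤ (cfDen α (n + 1) : ℝ) ^ (𝒜 ^ 3) :=
      (hmin M hM1 (by omega)).le
    have s3 : (cfDen α M : ℝ) ^ 𝒜 ≤ ((cfDen α (n + 1) : ℝ) ^ (𝒜 ^ 3)) ^ 𝒜 :=
      Real.rpow_le_rpow (Nat.cast_nonneg _) s2 h𝒜0
    have s4 : ((cfDen α (n + 1) : ℝ) ^ (𝒜 ^ 3)) ^ 𝒜 = (cfDen α (n + 1) : ℝ) ^ (𝒜 ^ 4) := by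
      rw [← Real.rpow_mul (Nat.cast_nonneg _)]
      congr 1 <;> ring
    rw [hM]
    linarith
  have hNnj : ¬ Jmp α 𝒜 N := by
    intro hj
    have t1 := hB N (by omega) hj
    have t3 : (cfDen α (n + 1) : ℝ) ^ (𝒜 ^ 4) ≤ (cfDen α (n + 1) : ℝ) ^ (𝒜 ^ 20) :=
      Real.rpow_le_rpow_of_exponent_le (hc1 _) (pow_le_pow_right₀ h𝒜.le (by norm_num))
    linarith
  exact ⟨h2l, hlt, hstep, hup, hNnj, hbig⟩

lemma key (h0 : 0 < α) (h1 : α < 1) (hα : Irrational α) (h𝒜 : 1 < 𝒜) (n : ℕ) :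
    n < nxt α 𝒜 n ∧
      (cfDen α (nxt α 𝒜 n) : ℝ) ≤ (cfDen α (n + 1) : ℝ) ^ (𝒜 ^ 20) ∧
      ((cfDen α (nxt α 𝒜 n) : ℝ) ^ 𝒜 < (cfDen α (nxt α 𝒜 n + 1) : ℝ) ∨
        (CDBridge α 𝒜 (𝒜 ^ 3) (𝒜 ^ 21) (n + 1) (nxt α 𝒜 n) ∧
         CDBridge α 𝒜 (𝒜 ^ 3) (𝒜 ^ 21) (nxt α 𝒜 n) (nxt α 𝒜 (nxt α 𝒜 n)))) := by
  have hq1 := one_le_q h0 h1 hα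
  have hc1 : ∀ k, (1 : ℝ) ≤ (cfDen α k : ℝ) := fun k => by exact_mod_cast hq1 k
  have h𝒜0 : (0 : ℝ) ≤ 𝒜 := by linarith
  have hmonoR : ∀ {i j : ℕ}, i ≤ j → (cfDen α i : ℝ) ≤ (cfDen α j : ℝ) := fun h =>
    Nat.cast_le.mpr (q_mono h0 h1 hα h)
  have hexp : ∀ (x : ℝ), 1 ≤ x → ∀ {j k : ℕ}, j ≤ k → x ^ (𝒜 ^ j) ≤ x ^ (𝒜 ^ k) :=
    fun x hx _ _ h =>
      Real.rpow_le_rpow_of_exponent_le hx (pow_le_pow_right₀ h𝒜.le h)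
  by_cases hA : ∃ J, n + 1 ≤ J ∧ Jmp α 𝒜 J ∧
      (cfDen α J : ℝ) ≤ (cfDen α (n + 1) : ℝ) ^ (𝒜 ^ 20)
  · obtain ⟨hs1, hs2, hs3, _⟩ := nxt_specA n hA
    exact ⟨by omega, hs3, Or.inl hs2⟩
  · push_neg at hA
    obtain ⟨h2l, hlt, hstep, hup, hNnj, hbig⟩ := caseB_facts h0 h1 hα h𝒜 n hA
    set N := nxt α 𝒜 n with hNdef
    have hNnj' : (cfDen α (N + 1) : ℝ) ≤ (cfDen α N : ℝ) ^ 𝒜 := by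
      have := hNnj
      simp only [Jmp, not_lt] at this
      exact this
    refine ⟨by omega, le_trans hup (hexp _ (hc1 _) (by norm_num)), Or.inr ⟨?_, ?_⟩⟩
    · exact ⟨by omega, hlt, hstep,
        le_trans hup (hexp _ (hc1 _) (by norm_num)), hbig⟩
    · by_cases hA' : ∃ J, N + 1 ≤ J ∧ Jmp α 𝒜 J ∧
          (cfDen α J : ℝ) ≤ (cfDen α (N + 1) : ℝ) ^ (𝒜 ^ 20)
      · obtain ⟨hs1, hs2, hs3, hs4⟩ := nxt_specA N hA'
        refine ⟨by omega, by omega, ?_, ?_, ?_⟩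
        · intro i hi1 hi2
          rcases eq_or_lt_of_le hi1 with rfl | hi1'
          · exact hNnj'
          · by_contra hcon
            push_neg at hcon
            have hji : Jmp α 𝒜 i := hcon
            have hminI := hs4 i hi2
            push_neg at hminI
            have t1 := hminI (by omega) hji
            have hmq : (cfDen α i : ℝ) ≤ (cfDen α (nxt α 𝒜 N) : ℝ) := hmonoR hi2.le
            linarith
        · have c1 : (cfDen α (N + 1) : ℝ) ^ (𝒜 ^ 20) ≤ ((cfDen α N : ℝ) ^ 𝒜) ^ (𝒜 ^ 20) :=
            Real.rpow_le_rpow (Nat.cast_nonneg _) hNnj' (pow_nonneg h𝒜0 _)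
          have c2 : ((cfDen α N : ℝ) ^ 𝒜) ^ (𝒜 ^ 20) = (cfDen α N : ℝ) ^ (𝒜 ^ 21) := by
            rw [← Real.rpow_mul (Nat.cast_nonneg _)]
            congr 1 <;> ring
          linarith
        · have t1 := hA (nxt α 𝒜 N) (by omega) hs2
          have c1 : (cfDen α N : ℝ) ^ (𝒜 ^ 3) ≤ (cfDen α N : ℝ) ^ (𝒜 ^ 16) :=
            hexp _ (hc1 _) (by norm_num)
          have c2 : (cfDen α N : ℝ) ^ (𝒜 ^ 16) ≤
              ((cfDen α (n + 1) : ℝ) ^ (𝒜 ^ 4)) ^ (𝒜 ^ 16) :=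
            Real.rpow_le_rpow (Nat.cast_nonneg _) hup (pow_nonneg h𝒜0 _)
          have c3 : ((cfDen α (n + 1) : ℝ) ^ (𝒜 ^ 4)) ^ (𝒜 ^ 16) =
              (cfDen α (n + 1) : ℝ) ^ (𝒜 ^ 20) := by
            rw [← Real.rpow_mul (Nat.cast_nonneg _)]
            congr 1 <;> ring
          linarith
      · push_neg at hA'
        obtain ⟨h2l', hlt', hstep', hupN, hNnj2', hbig'⟩ := caseB_facts h0 h1 hα h𝒜 N hA' 
        refine ⟨by omega, by omega, ?_, ?_, ?_⟩
        · intro i hi1 hi2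
          rcases eq_or_lt_of_le hi1 with rfl | hi1'
          · exact hNnj'
          · exact hstep' i (by omega) hi2
        · have c1 : (cfDen α (N + 1) : ℝ) ^ (𝒜 ^ 4) ≤ ((cfDen α N : ℝ) ^ 𝒜) ^ (𝒜 ^ 4) :=
            Real.rpow_le_rpow (Nat.cast_nonneg _) hNnj' (pow_nonneg h𝒜0 _)
          have c2 : ((cfDen α N : ℝ) ^ 𝒜) ^ (𝒜 ^ 4) = (cfDen α N : ℝ) ^ (𝒜 ^ 5) := by
            rw [← Real.rpow_mul (Nat.cast_nonneg _)]
            congr 1 <;> ring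
          have c3 : (cfDen α N : ℝ) ^ (𝒜 ^ 5) ≤ (cfDen α N : ℝ) ^ (𝒜 ^ 21) :=
            hexp _ (hc1 _) (by norm_num)
          linarith
        · have c1 : (cfDen α N : ℝ) ^ (𝒜 ^ 3) ≤ (cfDen α (N + 1) : ℝ) ^ (𝒜 ^ 3) :=
            Real.rpow_le_rpow (Nat.cast_nonneg _) (hmonoR (by omega)) (pow_nonneg h𝒜0 _)
          linarith

end AdmissibleAux

/-- **Existence of admissible subsequences** (Lemma 3.1, after Avila–Fayad–Krikorian).
For every irrational `α ∈ (0,1)` and every `𝒜 > 1` there exists an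
`(𝒜, 𝒜³, 𝒜²¹, 𝒜²⁰)`-admissible subsequence `(Q_k)` of the denominators of `α`
with `Q₀ = 1`. -/
theorem exists_admissible_subsequence
    (α : ℝ) (h0 : 0 < α) (h1 : α < 1) (hα : Irrational α)
    (𝒜 : ℝ) (h𝒜 : 1 < 𝒜) :
    ∃ m : ℕ → ℕ, cfDen α (m 0) = 1 ∧
      Admissible α 𝒜 (𝒜 ^ 3) (𝒜 ^ 21) (𝒜 ^ 20) m := by

  classical
  set m : ℕ → ℕ := fun j => (AdmissibleAux.nxt α 𝒜)^[j] 0 with hmdef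
  have hm : ∀ j, m (j + 1) = AdmissibleAux.nxt α 𝒜 (m j) := fun j =>
    Function.iterate_succ_apply' _ _ _
  have hkey := fun k => AdmissibleAux.key h0 h1 hα h𝒜 k
  refine ⟨m, ?_, ?_, ?_⟩
  · show cfDen α ((AdmissibleAux.nxt α 𝒜)^[0] 0) = 1
    rfl
  · apply strictMono_nat_of_lt_succ
    intro j
    rw [hm]
    exact (hkey (m j)).1
  · intro j
    have e2 : m (j + 2) = AdmissibleAux.nxt α 𝒜 (AdmissibleAux.nxt α 𝒜 (m j)) := by
      have : j + 2 = (j + 1) + 1 := by omega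
      rw [this, hm, hm]
    rw [e2, hm j]
    have h2 := hkey (m j)
    exact ⟨h2.2.1, h2.2.2⟩
end
end

section
/- Let η ∈ (0,1), let τ₀, τ₁, τ̃₀, τ₂ > 100 satisfy τ₀ ≥ τ₁ and τ̃₀ ≥ τ₂ > 10⁷τ₀/η, let 0 < ν < 1/2, and let 𝒜 > max(10⁷τ̃₀/(η τ₁), 10⁷τ̃₀/(η ν), τ̃₀/τ₀). Suppose (Q_l), (Q̄_l), (R_l), (R̄_l) are sequences of real numbers ≥ 2 with Q_l → ∞ and, for all l: Q_l ≤ R_l, Q̄_l ≥ Q_l, R̄_l ≥ R_l, R̄_l ≥ Q_l^𝒜, and R_l^𝒜 ≤ Q_{l+1}. Define the intervals ℳ_l = [Q_l^{8τ₀}, min(Q_{l+1}^{τ₁/16}, Q̄_{l+1}^{ν/16})] and ℳ̃_l = [R_l^{8τ̃₀}, min(R_{l+1}^{τ₂/16}, R̄_{l+1}^{ν/16})]. Then for every sufficiently large T > 0 there exists l such that [T^η, T^{101}] ⊆ ℳ_l or [T^η, T^{101}] ⊆ ℳ̃_l. -/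
open Set Filter

private lemma base_le_of_rpow_le {x y z : ℝ} (hx : 0 ≤ x) (hy : 0 ≤ y) (hz : 0 < z)
    (h : x ^ z ≤ y ^ z) : x ≤ y := by
  by_contra hc
  push_neg at hc
  exact absurd h (not_le.mpr (Real.rpow_lt_rpow hy hc hz))

private lemma le_rpow_inv_of_rpow_le {x y a : ℝ} (hx : 0 ≤ x) (ha : 0 < a)
    (h : x ^ a ≤ y) : x ≤ y ^ (1 / a) := by
  have hy : 0 ≤ y := le_trans (Real.rpow_nonneg hx a) h
  have := Real.rpow_le_rpow (Real.rpow_nonneg hx a) h (by positivity : (0:ℝ) ≤ 1 / a)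
  rwa [← Real.rpow_mul hx, mul_one_div, div_self ha.ne', Real.rpow_one] at this

private lemma chain_upper {T x c e d : ℝ} (hT : 1 ≤ T) (hx : 0 ≤ x)
    (h : x ≤ T ^ c) (he : 0 ≤ e) (hcd : c * e ≤ d) : x ^ e ≤ T ^ d := by
  have hT0 : (0:ℝ) ≤ T := le_trans zero_le_one hT
  calc x ^ e ≤ (T ^ c) ^ e := Real.rpow_le_rpow hx h he
    _ = T ^ (c * e) := (Real.rpow_mul hT0 c e).symm
    _ ≤ T ^ d := Real.rpow_le_rpow_of_exponent_le hT hcd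

private lemma chain_lower {T x c e d : ℝ} (hT : 1 ≤ T)
    (h : T ^ c ≤ x) (he : 0 ≤ e) (hcd : d ≤ c * e) : T ^ d ≤ x ^ e := by
  have hT0 : (0:ℝ) ≤ T := le_trans zero_le_one hT
  calc T ^ d ≤ T ^ (c * e) := Real.rpow_le_rpow_of_exponent_le hT hcd
    _ = (T ^ c) ^ e := Real.rpow_mul hT0 c e
    _ ≤ x ^ e := Real.rpow_le_rpow (Real.rpow_nonneg hT0 c) h he

/-- **Covering of all large scales by the two families of good intervals** (the scale-covering
argument in the proof of the main theorem).  Given the two admissible scales `(Q_l, Q̄_l)` and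
`(R_l, R̄_l)` with the stated growth relations, every interval `[T^η, T^101]` with `T` large
is contained in some `ℳ_l = [Q_l^{8τ₀}, min(Q_{l+1}^{τ₁/16}, Q̄_{l+1}^{ν/16})]` or in some
`ℳ̃_l = [R_l^{8τ̃₀}, min(R_{l+1}^{τ₂/16}, R̄_{l+1}^{ν/16})]`. -/
theorem scale_covering
    (η τ₀ τ₁ τt₀ τ₂ ν 𝒜 : ℝ)
    (hη : 0 < η) (hη1 : η < 1)
    (hτ₀ : 100 < τ₀) (hτ₁ : 100 < τ₁) (hτt₀ : 100 < τt₀) (hτ₂ : 100 < τ₂)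
    (hτ₀₁ : τ₁ ≤ τ₀) (hτt₂ : τ₂ ≤ τt₀) (hτ₂big : 10 ^ 7 * τ₀ / η < τ₂)
    (hν0 : 0 < ν) (hν : ν < 1 / 2)
    (h𝒜 : max (max (10 ^ 7 * τt₀ / (η * τ₁)) (10 ^ 7 * τt₀ / (η * ν))) (τt₀ / τ₀) < 𝒜)
    (Q Qb R Rb : ℕ → ℝ)
    (h2 : ∀ l, 2 ≤ Q l ∧ 2 ≤ Qb l ∧ 2 ≤ R l ∧ 2 ≤ Rb l)
    (hQtop : Tendsto Q atTop atTop)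
    (hQR : ∀ l, Q l ≤ R l) (hQQb : ∀ l, Q l ≤ Qb l) (hRRb : ∀ l, R l ≤ Rb l)
    (hRbQ : ∀ l, Q l ^ 𝒜 ≤ Rb l) (hRQ : ∀ l, R l ^ 𝒜 ≤ Q (l + 1)) :
    ∃ T₀ : ℝ, ∀ T : ℝ, T₀ ≤ T → ∃ l : ℕ,
      Icc (T ^ η) (T ^ (101 : ℝ)) ⊆
          Icc (Q l ^ (8 * τ₀)) (min (Q (l + 1) ^ (τ₁ / 16)) (Qb (l + 1) ^ (ν / 16))) ∨
      Icc (T ^ η) (T ^ (101 : ℝ)) ⊆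
          Icc (R l ^ (8 * τt₀)) (min (R (l + 1) ^ (τ₂ / 16)) (Rb (l + 1) ^ (ν / 16))) := by
  classical
  have h𝒜1 : 10 ^ 7 * τt₀ / (η * τ₁) < 𝒜 :=
    lt_of_le_of_lt (le_max_left _ _ |>.trans (le_max_left _ _)) h𝒜
  have h𝒜2 : 10 ^ 7 * τt₀ / (η * ν) < 𝒜 :=
    lt_of_le_of_lt (le_max_right _ _ |>.trans (le_max_left _ _)) h𝒜
  have hτ₀pos : (0:ℝ) < τ₀ := by linarith
  have hτ₁pos : (0:ℝ) < τ₁ := by linarith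
  have hτt₀pos : (0:ℝ) < τt₀ := by linarith
  have hτ₂pos : (0:ℝ) < τ₂ := by linarith
  have h𝒜pos : (0:ℝ) < 𝒜 := lt_trans (by positivity) h𝒜1
  -- arithmetic facts
  have hA1 : 10 ^ 7 * τt₀ < 𝒜 * (η * τ₁) := (div_lt_iff₀ (by positivity)).mp h𝒜1
  have hA2 : 10 ^ 7 * τt₀ < 𝒜 * (η * ν) := (div_lt_iff₀ (by positivity)).mp h𝒜2
  have hT2 : 10 ^ 7 * τ₀ < τ₂ * η := (div_lt_iff₀ hη).mp hτ₂big
  have hτt₀τ₀ : τ₀ < τt₀ := by nlinarith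
  refine ⟨max 2 (Q 1 ^ (8 * τ₀ / η)), fun T hT => ?_⟩
  have hT2' : (2:ℝ) ≤ T := le_trans (le_max_left _ _) hT
  have hT1 : (1:ℝ) ≤ T := by linarith
  have hT0 : (0:ℝ) ≤ T := by linarith
  -- T^η ≥ Q 1 ^ (8τ₀)
  have hQ1 : Q 1 ^ (8 * τ₀) ≤ T ^ η := by
    have h1 : Q 1 ^ (8 * τ₀ / η) ≤ T := le_trans (le_max_right _ _) hT
    have h2' : (Q 1 ^ (8 * τ₀ / η)) ^ η ≤ T ^ η :=
      Real.rpow_le_rpow (Real.rpow_nonneg (by linarith [(h2 1).1]) _) h1 hη.le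
    rwa [← Real.rpow_mul (by linarith [(h2 1).1]), div_mul_cancel₀ _ hη.ne'] at h2'
  -- existence of an index with Q (l+1) ^ (8 τ₀) > T ^ η
  have hex : ∃ l : ℕ, T ^ η < Q (l + 1) ^ (8 * τ₀) := by
    obtain ⟨N, hN⟩ := (hQtop.eventually_gt_atTop (T ^ (η / (8 * τ₀)))).exists_forall_of_atTop
    refine ⟨N, ?_⟩
    have h1 : T ^ (η / (8 * τ₀)) < Q (N + 1) := hN _ (Nat.le_succ N)
    have h2' : (T ^ (η / (8 * τ₀))) ^ (8 * τ₀) < Q (N + 1) ^ (8 * τ₀) :=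
      Real.rpow_lt_rpow (Real.rpow_nonneg hT0 _) h1 (by positivity)
    rwa [← Real.rpow_mul hT0, div_mul_cancel₀ _ (by positivity : (8:ℝ) * τ₀ ≠ 0)] at h2'
  obtain ⟨l, hup, hlo⟩ :
      ∃ l : ℕ, T ^ η < Q (l + 1) ^ (8 * τ₀) ∧ Q l ^ (8 * τ₀) ≤ T ^ η := by
    refine ⟨Nat.find hex, Nat.find_spec hex, ?_⟩
    have hlpos : Nat.find hex ≠ 0 := by
      intro h0
      have := Nat.find_spec hex
      rw [h0] at this
      exact absurd hQ1 (not_le.mpr this)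
    obtain ⟨m, hm⟩ := Nat.exists_eq_succ_of_ne_zero hlpos
    have h' := Nat.find_min hex (show m < Nat.find hex by omega)
    have hml : m + 1 = Nat.find hex := by omega
    rw [hml] at h'
    exact not_lt.mp h'
  -- from hup : Q (l+1) ≥ T ^ (η / (8 τ₀))
  have hQbig : T ^ (η / (8 * τ₀)) ≤ Q (l + 1) := by
    apply base_le_of_rpow_le (Real.rpow_nonneg hT0 _) (by linarith [(h2 (l+1)).1]) (by positivity : (0:ℝ) < 8 * τ₀)
    rw [← Real.rpow_mul hT0, div_mul_cancel₀ _ (by positivity : (8:ℝ) * τ₀ ≠ 0)]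
    exact hup.le
  by_cases hcase : T ^ (101 : ℝ) ≤ min (Q (l + 1) ^ (τ₁ / 16)) (Qb (l + 1) ^ (ν / 16))
  · exact ⟨l, Or.inl (Icc_subset_Icc hlo hcase)⟩
  · refine ⟨l, Or.inr ?_⟩
    -- In either subcase Q (l+1) ≤ T ^ c with c * (8 τt₀) / 𝒜 ≤ η
    have key : ∃ c : ℝ, 0 < c ∧ Q (l + 1) ≤ T ^ c ∧ c / 𝒜 * (8 * τt₀) ≤ η := by
      rw [not_le, min_lt_iff] at hcase
      rcases hcase with hc1 | hc2
      · refine ⟨101 * (16 / τ₁), by positivity, ?_, ?_⟩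
        · have := le_rpow_inv_of_rpow_le (by linarith [(h2 (l+1)).1]) (by positivity : (0:ℝ) < τ₁ / 16) hc1.le
          rwa [← Real.rpow_mul hT0, one_div, inv_div] at this
        · have heq : 101 * (16 / τ₁) / 𝒜 * (8 * τt₀) = 12928 * τt₀ / (τ₁ * 𝒜) := by
            field_simp; ring
          rw [heq, div_le_iff₀ (by positivity)]
          have heq2 : η * (τ₁ * 𝒜) = 𝒜 * (η * τ₁) := by ring
          linarith [hA1, hτt₀pos]
      · refine ⟨101 * (16 / ν), by positivity, ?_, ?_⟩
        · have hQb := le_rpow_inv_of_rpow_le (by linarith [(h2 (l+1)).2.1]) (by positivity : (0:ℝ) < ν / 16) hc2.le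
          rw [← Real.rpow_mul hT0, one_div, inv_div] at hQb
          exact le_trans (hQQb (l+1)) hQb
        · have heq : 101 * (16 / ν) / 𝒜 * (8 * τt₀) = 12928 * τt₀ / (ν * 𝒜) := by
            field_simp; ring
          rw [heq, div_le_iff₀ (by positivity)]
          have heq2 : η * (ν * 𝒜) = 𝒜 * (η * ν) := by ring
          linarith [hA2, hτt₀pos]
    obtain ⟨c, hc0, hQc, hcη⟩ := key
    -- lower endpoint: R l ^ (8 τt₀) ≤ T ^ η
    have hRl : R l ^ (8 * τt₀) ≤ T ^ η := by
      have hR0 : (0:ℝ) ≤ R l := by linarith [(h2 l).2.2.1]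
      have h1 : R l ≤ T ^ (c / 𝒜) := by
        have := le_rpow_inv_of_rpow_le hR0 h𝒜pos (le_trans (hRQ l) hQc)
        rwa [← Real.rpow_mul hT0, mul_one_div] at this
      exact chain_upper hT1 hR0 h1 (by positivity) hcη
    -- upper endpoint
    have hR1 : T ^ (101 : ℝ) ≤ R (l + 1) ^ (τ₂ / 16) := by
      have h1 : T ^ (η / (8 * τ₀)) ≤ R (l + 1) := le_trans hQbig (hQR (l + 1))
      refine chain_lower hT1 h1 (by positivity) ?_
      rw [div_mul_div_comm, le_div_iff₀ (by positivity)]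
      have heq : η * τ₂ = τ₂ * η := mul_comm _ _
      linarith [hT2, hτ₀pos]
    have hR2 : T ^ (101 : ℝ) ≤ Rb (l + 1) ^ (ν / 16) := by
      have h1 : T ^ (η / (8 * τ₀) * 𝒜) ≤ Rb (l + 1) := by
        have h2' : (T ^ (η / (8 * τ₀))) ^ 𝒜 ≤ Q (l + 1) ^ 𝒜 :=
          Real.rpow_le_rpow (Real.rpow_nonneg hT0 _) hQbig h𝒜pos.le
        rw [← Real.rpow_mul hT0] at h2'
        exact le_trans h2' (hRbQ (l + 1))
      refine chain_lower hT1 h1 (by positivity) ?_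
      have heq : η / (8 * τ₀) * 𝒜 * (ν / 16) = η * 𝒜 * ν / (128 * τ₀) := by ring
      rw [heq, le_div_iff₀ (by positivity)]
      have heq2 : η * 𝒜 * ν = 𝒜 * (η * ν) := by ring
      linarith [hA2, hτt₀τ₀, hτ₀pos]
    exact Icc_subset_Icc hRl (le_min hR1 hR2)
end

section
/- Let α ∈ ℝ∖ℚ, V ∈ C^ω(𝕋,ℝ), θ ∈ 𝕋, and let u(t) = e^{−i t L_θ} u(0) with u(0) ∈ W²(ℤ). Then lim_{T→∞} sup_{0 ≤ t ≤ T} max_{N ∈ {±(⌊T^{100}⌋+1), ±(⌊T^{100}⌋+2)}} |N u_N(t)| = 0. -/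
open MeasureTheory Filter
open scoped ENNReal Topology

noncomputable section

/-- The Hilbert space `ℓ²(ℤ)`. -/
abbrev ℓ2 := lp (fun _ : ℤ => ℂ) 2

/-- `L` is the quasi-periodic Schrödinger operator `(L u)_n = -(u_{n+1}+u_{n-1}) + V(θ+nα) u_n`
on `ℓ²(ℤ)`. -/
def IsSchrodingerOp (α θ : ℝ) (V : ℝ → ℝ) (L : ℓ2 →L[ℂ] ℓ2) : Prop :=
  ∀ (u : ℓ2) (n : ℤ), L u n = -(u (n + 1) + u (n - 1)) + (V (θ + n * α) : ℂ) * u n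

/-- The time evolution `e^{-itL}` of the Schrödinger equation `i (d/dt) u = L u`. -/
def evol (L : ℓ2 →L[ℂ] ℓ2) (t : ℝ) : ℓ2 →L[ℂ] ℓ2 :=
  NormedSpace.exp ((-(Complex.I * (t : ℂ))) • L)

/-- The square `⟨u⟩_p²` of the `p`-th moment norm: `∑_{n∈ℤ} (|n|^p + 1)|u_n|²`. -/
def momentSq (p : ℝ) (u : ℤ → ℂ) : ℝ := ∑' n : ℤ, (|(n : ℝ)| ^ p + 1) * ‖u n‖ ^ 2

/-- The `p`-th moment norm `⟨u⟩_p`. -/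
def moment (p : ℝ) (u : ℤ → ℂ) : ℝ := Real.sqrt (momentSq p u)

/-- Membership in `𝒲^p(ℤ)`, i.e. `⟨u⟩_p < ∞`. -/
def MemW (p : ℝ) (u : ℤ → ℂ) : Prop :=
  Summable (fun n : ℤ => (|(n : ℝ)| ^ p + 1) * ‖u n‖ ^ 2)

/-- `V` is real-analytic and `1`-periodic, i.e. `V ∈ C^ω(𝕋, ℝ)`. -/
def IsAnalyticPeriodic (V : ℝ → ℝ) : Prop :=
  (∀ x, V (x + 1) = V x) ∧ ∀ x, AnalyticAt ℝ V x

/-- `L` has purely absolutely continuous spectrum: every spectral measure is absolutely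
continuous with respect to Lebesgue measure.  The spectral measure `μ_ψ` of a vector `ψ` is
characterized by `⟨ψ, e^{-itL} ψ⟩ = ∫ e^{-itx} dμ_ψ(x)` for all `t ∈ ℝ`. -/
def HasPurelyACSpectrum (L : ℓ2 →L[ℂ] ℓ2) : Prop :=
  ∀ ψ : ℓ2, ∃ μ : Measure ℝ, IsFiniteMeasure μ ∧ μ ≪ volume ∧
    ∀ t : ℝ, (inner ℂ ψ (evol L t ψ) : ℂ) = ∫ x : ℝ, Complex.exp (-(Complex.I * t * x)) ∂μ

open Classical in
/-- `p' = p` if `p` is an even integer and `p' = 2⌊p/2⌋ + 2` otherwise. -/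
def pPrime (p : ℝ) : ℝ := if ∃ k : ℤ, p = 2 * k then p else 2 * ⌊p / 2⌋ + 2

section Helpers

open scoped ComplexConjugate

local notation "⟪" x ", " y "⟫" => @inner ℂ _ _ x y

lemma summable_normsq (u : ℓ2) : Summable (fun n : ℤ => ‖u n‖ ^ 2) := by
  have h := lp.memℓp u
  rw [memℓp_gen_iff (by norm_num : (0:ℝ) < (2:ℝ≥0∞).toReal)] at h
  have : ∀ n : ℤ, ‖u n‖ ^ ((2:ℝ≥0∞).toReal) = ‖u n‖ ^ (2:ℕ) := by
    intro n
    norm_num [Real.rpow_natCast]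
  simpa [this] using h

lemma summable_prod_shift (u v : ℓ2) (σ : ℤ) :
    Summable (fun n : ℤ => conj (u (n + σ)) * v n) := by
  apply Summable.of_norm
  have hu : Summable (fun n : ℤ => ‖u (n + σ)‖ ^ 2) :=
    ((Equiv.addRight σ).summable_iff (f := fun n : ℤ => ‖u n‖ ^ 2)).2 (summable_normsq u)
  have hv := summable_normsq v
  apply Summable.of_nonneg_of_le (fun n => norm_nonneg _)
    (fun n => ?_) ((hu.add hv).div_const 2)
  have h2 : ‖conj (u (n + σ)) * v n‖ = ‖u (n + σ)‖ * ‖v n‖ := by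
    simp [norm_mul]
  rw [h2]
  nlinarith [norm_nonneg (u (n + σ)), norm_nonneg (v n), sq_nonneg (‖u (n + σ)‖ - ‖v n‖)]

end Helpers

section SelfAdj

open scoped ComplexConjugate

local notation "⟪" x ", " y "⟫" => @inner ℂ _ _ x y

lemma summable_prod_shift' (u v : ℓ2) (σ τ : ℤ) :
    Summable (fun n : ℤ => conj (u (n + σ)) * v (n + τ)) := by
  apply Summable.of_norm
  have hu : Summable (fun n : ℤ => ‖u (n + σ)‖ ^ 2) :=
    ((Equiv.addRight σ).summable_iff (f := fun n : ℤ => ‖u n‖ ^ 2)).2 (summable_normsq u)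
  have hv : Summable (fun n : ℤ => ‖v (n + τ)‖ ^ 2) :=
    ((Equiv.addRight τ).summable_iff (f := fun n : ℤ => ‖v n‖ ^ 2)).2 (summable_normsq v)
  apply Summable.of_nonneg_of_le (fun n => norm_nonneg _)
    (fun n => ?_) ((hu.add hv).div_const 2)
  have h2 : ‖conj (u (n + σ)) * v (n + τ)‖ = ‖u (n + σ)‖ * ‖v (n + τ)‖ := by
    simp [norm_mul]
  rw [h2]
  nlinarith [norm_nonneg (u (n + σ)), norm_nonneg (v (n + τ)),
    sq_nonneg (‖u (n + σ)‖ - ‖v (n + τ)‖)]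

lemma schrodinger_selfAdjoint {α θ : ℝ} {V : ℝ → ℝ} {L : ℓ2 →L[ℂ] ℓ2}
    (hL : IsSchrodingerOp α θ V L) : IsSelfAdjoint L := by
  rw [ContinuousLinearMap.isSelfAdjoint_iff_isSymmetric]
  intro x y
  have h1 : Summable fun n : ℤ => ⟪(L x) n, y n⟫ := lp.summable_inner _ _
  have h2 : Summable fun n : ℤ => ⟪x n, (L y) n⟫ := lp.summable_inner _ _
  have hf1 : Summable (fun n : ℤ => conj (x (n + 1)) * y (n + 0)) :=
    summable_prod_shift' x y 1 0
  have hf2 : Summable (fun n : ℤ => conj (x (n + (-1))) * y (n + 0)) :=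
    summable_prod_shift' x y (-1) 0
  have hg1 : Summable (fun n : ℤ => conj (x (n + 0)) * y (n + 1)) :=
    summable_prod_shift' x y 0 1
  have hg2 : Summable (fun n : ℤ => conj (x (n + 0)) * y (n + (-1))) :=
    summable_prod_shift' x y 0 (-1)
  have key : ∀ n : ℤ, ⟪(L x) n, y n⟫ - ⟪x n, (L y) n⟫ =
      ((-(conj (x (n+1)) * y (n+0))) + (-(conj (x (n+(-1))) * y (n+0))))
      + ((conj (x (n+0)) * y (n+1)) + (conj (x (n+0)) * y (n+(-1)))) := by
    intro n
    simp only [add_zero, show n + (-1) = n - 1 from by ring]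
    rw [RCLike.inner_apply, RCLike.inner_apply, hL x n, hL y n,
      map_add, map_neg, map_add, map_mul, Complex.conj_ofReal]
    ring
  have hsub : ⟪L x, y⟫ - ⟪x, L y⟫ = 0 := by
    rw [lp.inner_eq_tsum, lp.inner_eq_tsum, ← Summable.tsum_sub h1 h2]
    calc ∑' n : ℤ, (⟪(L x) n, y n⟫ - ⟪x n, (L y) n⟫)
        = ∑' n : ℤ, (((-(conj (x (n+1)) * y (n+0))) + (-(conj (x (n+(-1))) * y (n+0))))
            + ((conj (x (n+0)) * y (n+1)) + (conj (x (n+0)) * y (n+(-1))))) := by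
          exact tsum_congr key
      _ = ((∑' n : ℤ, -(conj (x (n+1)) * y (n+0))) + ∑' n : ℤ, -(conj (x (n+(-1))) * y (n+0)))
            + ((∑' n : ℤ, conj (x (n+0)) * y (n+1)) + ∑' n : ℤ, conj (x (n+0)) * y (n+(-1))) := by
          rw [Summable.tsum_add (hf1.neg.add hf2.neg) (hg1.add hg2), Summable.tsum_add hf1.neg hf2.neg,
            Summable.tsum_add hg1 hg2]
      _ = 0 := by
          rw [tsum_neg, tsum_neg]
          have sh1 : ∑' n : ℤ, conj (x (n+1)) * y (n+0)
              = ∑' n : ℤ, conj (x (n+0)) * y (n+(-1)) := by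
            rw [← (Equiv.addRight (-1 : ℤ)).tsum_eq (fun n => conj (x (n+1)) * y (n+0))]
            apply tsum_congr; intro n
            simp only [Equiv.coe_addRight]
            norm_num
          have sh2 : ∑' n : ℤ, conj (x (n+(-1))) * y (n+0)
              = ∑' n : ℤ, conj (x (n+0)) * y (n+1) := by
            rw [← (Equiv.addRight (1 : ℤ)).tsum_eq (fun n => conj (x (n+(-1))) * y (n+0))]
            apply tsum_congr; intro n
            simp only [Equiv.coe_addRight]
            norm_num
          rw [sh1, sh2]; ring
  have := sub_eq_zero.mp hsub
  exact this

end SelfAdj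

section Unitary

local notation "⟪" x ", " y "⟫" => @inner ℂ _ _ x y

lemma evol_norm_eq {L : ℓ2 →L[ℂ] ℓ2} (hL : IsSelfAdjoint L) (t : ℝ) (v : ℓ2) :
    ‖evol L t v‖ = ‖v‖ := by
  set A := (-(Complex.I * (t : ℂ))) • L with hA
  have hstar : star A = -A := by
    rw [hA, star_smul, hL.star_eq]
    rw [show star (-(Complex.I * (t:ℂ))) = Complex.I * (t:ℂ) by
      simp [Complex.ext_iff]]
    rw [← neg_smul]
    congr 1
    ring
  have hmul : star (NormedSpace.exp A) * NormedSpace.exp A = 1 := by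
    rw [NormedSpace.star_exp, hstar, ← NormedSpace.exp_add_of_commute_of_mem_ball (𝕂 := ℂ) (Commute.refl A).neg_left
      ((NormedSpace.expSeries_radius_eq_top ℂ (ℓ2 →L[ℂ] ℓ2)).symm ▸ edist_lt_top _ _)
      ((NormedSpace.expSeries_radius_eq_top ℂ (ℓ2 →L[ℂ] ℓ2)).symm ▸ edist_lt_top _ _)]
    simp
  have h1 : (⟪evol L t v, evol L t v⟫) = ⟪v, v⟫ := by
    have h2 := (ContinuousLinearMap.adjoint_inner_right (NormedSpace.exp A)
      v (NormedSpace.exp A v)).symm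
    rw [← ContinuousLinearMap.star_eq_adjoint] at h2
    have h3 : (star (NormedSpace.exp A)) ((NormedSpace.exp A) v)
        = (star (NormedSpace.exp A) * NormedSpace.exp A) v := rfl
    rw [h3, hmul] at h2
    simpa [evol, hA] using h2
  have h4 : ‖evol L t v‖ ^ 2 = ‖v‖ ^ 2 := by
    have := norm_sq_eq_re_inner (𝕜 := ℂ) (evol L t v)
    rw [h1, ← norm_sq_eq_re_inner (𝕜 := ℂ) v] at this
    exact this
  calc ‖evol L t v‖ = Real.sqrt (‖evol L t v‖ ^ 2) := (Real.sqrt_sq (norm_nonneg _)).symm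
    _ = Real.sqrt (‖v‖ ^ 2) := by rw [h4]
    _ = ‖v‖ := Real.sqrt_sq (norm_nonneg _)

end Unitary

section Support

lemma pow_apply_eq_zero_of_far {α θ : ℝ} {V : ℝ → ℝ} {L : ℓ2 →L[ℂ] ℓ2}
    (hL : IsSchrodingerOp α θ V L) :
    ∀ (k : ℕ) (v : ℓ2) (N : ℤ), (∀ m : ℤ, |m - N| ≤ (k : ℤ) → v m = 0) →
      ((L ^ k) v) N = 0 := by
  intro k
  induction k with
  | zero => intro v N h; simpa using h N (by simp)
  | succ k ih =>
    intro v N h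
    have hpow : (L ^ (k + 1)) v = (L ^ k) (L v) := by
      rw [pow_succ]; rfl
    rw [hpow]
    apply ih
    intro m hm
    rw [hL v m]
    have h1 : v (m + 1) = 0 := by
      apply h
      have h' : |m + 1 - N| ≤ |m - N| + 1 := by
        calc |m + 1 - N| = |(m - N) + 1| := by ring_nf
          _ ≤ |m - N| + |(1 : ℤ)| := abs_add_le _ _
          _ = |m - N| + 1 := by norm_num
      push_cast
      push_cast at hm
      linarith
    have h2 : v (m - 1) = 0 := by
      apply h
      have h' : |m - 1 - N| ≤ |m - N| + 1 := by
        calc |m - 1 - N| = |(m - N) + (-1)| := by ring_nf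
          _ ≤ |m - N| + |(-1 : ℤ)| := abs_add_le _ _
          _ = |m - N| + 1 := by norm_num
      push_cast
      push_cast at hm
      linarith
    have h3 : v m = 0 := by
      apply h
      push_cast
      push_cast at hm
      linarith
    rw [h1, h2, h3]
    ring
end Support

section TailBound
open scoped Nat

set_option maxHeartbeats 2000000 in
lemma exp_tail_bound (A : ℓ2 →L[ℂ] ℓ2) (d : ℕ) (hd : 1 ≤ d) :
    ‖NormedSpace.exp A - ∑ k ∈ Finset.range d, ((k ! : ℂ)⁻¹) • A ^ k‖
      ≤ ‖A‖ ^ d / d ! * Real.exp ‖A‖ := by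
  have hsum : Summable (fun k : ℕ => ((k ! : ℂ)⁻¹) • A ^ k) :=
    NormedSpace.expSeries_summable' A
  have hnorm : Summable (fun k : ℕ => ‖((k ! : ℂ)⁻¹) • A ^ k‖) :=
    NormedSpace.norm_expSeries_summable' A
  have htail : Summable (fun i : ℕ => ‖(((i + d)! : ℂ)⁻¹) • A ^ (i + d)‖) :=
    (summable_nat_add_iff d).2 hnorm
  have hdiff : NormedSpace.exp A - ∑ k ∈ Finset.range d, ((k ! : ℂ)⁻¹) • A ^ k
      = ∑' i : ℕ, (((i + d)! : ℂ)⁻¹) • A ^ (i + d) := by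
    simp only [NormedSpace.exp_eq_tsum ℂ]
    rw [← Summable.sum_add_tsum_nat_add d hsum]
    abel
  rw [hdiff]
  have hbound : ∀ i : ℕ, ‖(((i + d)! : ℂ)⁻¹) • A ^ (i + d)‖
      ≤ ‖A‖ ^ d / d ! * (‖A‖ ^ i / i !) := by
    intro i
    rw [norm_smul (((i + d)! : ℂ)⁻¹) (A ^ (i+d))]
    have h1 : ‖((i + d)! : ℂ)⁻¹‖ = (((i + d)! : ℝ))⁻¹ := by
      rw [norm_inv, Complex.norm_natCast]
    rw [h1]
    have h2 : ‖A ^ (i + d)‖ ≤ ‖A‖ ^ (i + d) := norm_pow_le' A (by omega)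
    have h3 : (d ! : ℝ) * (i !) ≤ ((i + d)! : ℝ) := by
      have := Nat.factorial_mul_factorial_dvd_factorial_add d i
      have hle : d ! * i ! ≤ (d + i)! := Nat.le_of_dvd (Nat.factorial_pos _) this
      have : (d + i)! = (i + d)! := by rw [Nat.add_comm]
      rw [← this]
      exact_mod_cast hle
    calc (((i + d)! : ℝ))⁻¹ * ‖A ^ (i + d)‖ ≤ (((i + d)! : ℝ))⁻¹ * ‖A‖ ^ (i + d) := by
          apply mul_le_mul_of_nonneg_left h2 (by positivity)
      _ ≤ ((d ! : ℝ) * (i !))⁻¹ * ‖A‖ ^ (i + d) := by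
          apply mul_le_mul_of_nonneg_right _ (by positivity)
          apply inv_anti₀ (by positivity) h3
      _ = ‖A‖ ^ d / d ! * (‖A‖ ^ i / i !) := by
          rw [pow_add, div_mul_div_comm, inv_mul_eq_div]
          ring
  calc ‖∑' i : ℕ, (((i + d)! : ℂ)⁻¹) • A ^ (i + d)‖
      ≤ ∑' i : ℕ, ‖(((i + d)! : ℂ)⁻¹) • A ^ (i + d)‖ := norm_tsum_le_tsum_norm htail
    _ ≤ ∑' i : ℕ, ‖A‖ ^ d / d ! * (‖A‖ ^ i / i !) :=
        Summable.tsum_le_tsum hbound htail ((Real.summable_pow_div_factorial ‖A‖).mul_left _)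
    _ = ‖A‖ ^ d / d ! * ∑' i : ℕ, ‖A‖ ^ i / i ! := tsum_mul_left
    _ = ‖A‖ ^ d / d ! * Real.exp ‖A‖ := by
        congr 1
        rw [Real.exp_eq_exp_ℝ, NormedSpace.exp_eq_tsum_div]

lemma pow_div_factorial_le_half_pow (x : ℝ) (d : ℕ) (hx : 0 ≤ x) (hd : 1 ≤ d)
    (h : 2 * (Real.exp 1 * x) ≤ d) : x ^ d / d ! ≤ (1/2 : ℝ) ^ d := by
  have hdpos : (0:ℝ) < d := by exact_mod_cast hd
  have h1 : (d:ℝ) ^ d / d ! ≤ Real.exp 1 ^ d := by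
    have hterm : (d:ℝ) ^ d / d ! ≤ Real.exp d := by
      have := Summable.le_tsum (Real.summable_pow_div_factorial (d : ℝ)) d
        (fun i _ => by positivity)
      rwa [Real.exp_eq_exp_ℝ, NormedSpace.exp_eq_tsum_div]
    calc (d:ℝ) ^ d / d ! ≤ Real.exp d := hterm
      _ = Real.exp 1 ^ d := by
          rw [← Real.exp_nat_mul]; norm_num
  have key : x ^ d / d ! ≤ (Real.exp 1 * x / d) ^ d := by
    rw [div_pow, mul_pow, div_le_div_iff₀ (by positivity) (by positivity)]
    calc x ^ d * (d:ℝ) ^ d = (d:ℝ) ^ d * x ^ d := by ring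
      _ ≤ (Real.exp 1 ^ d * d !) * x ^ d := by
          apply mul_le_mul_of_nonneg_right _ (by positivity)
          rw [div_le_iff₀ (by positivity)] at h1
          linarith
      _ = Real.exp 1 ^ d * x ^ d * d ! := by ring
  have h2 : Real.exp 1 * x / d ≤ 1/2 := by
    rw [div_le_iff₀ hdpos]
    linarith
  calc x ^ d / d ! ≤ (Real.exp 1 * x / d) ^ d := key
    _ ≤ (1/2 : ℝ) ^ d := pow_le_pow_left₀ (by positivity) h2 d

end TailBound

section FarCoord
open scoped Nat

set_option maxHeartbeats 2000000 in
lemma evol_far_coord_bound {α θ : ℝ} {V : ℝ → ℝ} {L : ℓ2 →L[ℂ] ℓ2}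
    (hL : IsSchrodingerOp α θ V L) (t : ℝ) (K d : ℕ) (hd : 1 ≤ d)
    (a : ℓ2) (ha : ∀ m : ℤ, (K : ℤ) < |m| → a m = 0)
    (N : ℤ) (hN : (K : ℤ) + d ≤ |N|) :
    ‖(evol L t a) N‖
      ≤ (‖(-(Complex.I * (t : ℂ))) • L‖ ^ d / d !)
          * Real.exp ‖(-(Complex.I * (t : ℂ))) • L‖ * ‖a‖ := by
  set A := (-(Complex.I * (t : ℂ))) • L with hA
  set P : ℓ2 →L[ℂ] ℓ2 := ∑ k ∈ Finset.range d, ((k ! : ℂ)⁻¹) • A ^ k with hP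
  have hzero : ∀ k : ℕ, k < d → ((L ^ k) a) N = 0 := by
    intro k hk
    apply pow_apply_eq_zero_of_far hL k a N
    intro m hm
    apply ha
    have h1 : |N| - |m| ≤ |m - N| := by
      calc |N| - |m| ≤ |N - m| := abs_sub_abs_le_abs_sub N m
        _ = |m - N| := abs_sub_comm N m
    omega
  have hPa : (P a) N = 0 := by
    rw [hP, ContinuousLinearMap.sum_apply, lp.coeFn_sum, Finset.sum_apply]
    apply Finset.sum_eq_zero
    intro k hk
    rw [ContinuousLinearMap.smul_apply, lp.coeFn_smul, Pi.smul_apply]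
    have : A ^ k = ((-(Complex.I * (t : ℂ))) ^ k) • L ^ k := by
      rw [hA, smul_pow]
    rw [this, ContinuousLinearMap.smul_apply, lp.coeFn_smul, Pi.smul_apply,
      hzero k (Finset.mem_range.mp hk)]
    simp
  have hsplit : (evol L t a) N = (((NormedSpace.exp A - P) a) : ℓ2) N := by
    rw [ContinuousLinearMap.sub_apply, lp.coeFn_sub, Pi.sub_apply, hPa]
    simp [evol, hA]
  rw [hsplit]
  calc ‖(((NormedSpace.exp A - P) a) : ℓ2) N‖
      ≤ ‖(NormedSpace.exp A - P) a‖ :=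
        lp.norm_apply_le_norm (by norm_num) _ N
    _ ≤ ‖NormedSpace.exp A - P‖ * ‖a‖ := ContinuousLinearMap.le_opNorm _ _
    _ ≤ (‖A‖ ^ d / d ! * Real.exp ‖A‖) * ‖a‖ := by
        apply mul_le_mul_of_nonneg_right (exp_tail_bound A d hd) (norm_nonneg _)

end FarCoord

section Trunc
open scoped Nat

lemma toReal_two : ((2:ℝ≥0∞)).toReal = (2:ℝ) := by norm_num

lemma rpow_toReal_two (x : ℝ) : x ^ ((2:ℝ≥0∞)).toReal = x ^ (2:ℕ) := by
  rw [toReal_two, show (2:ℝ) = ((2:ℕ):ℝ) by norm_num, Real.rpow_natCast]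

lemma norm_sq_eq_tsum (v : ℓ2) : ‖v‖ ^ (2:ℕ) = ∑' m : ℤ, ‖v m‖ ^ (2:ℕ) := by
  have h := lp.norm_rpow_eq_tsum (p := 2) (by simp [toReal_two]) v
  rw [rpow_toReal_two] at h
  rw [h]
  congr 1
  funext m
  rw [rpow_toReal_two]

/-- The weight sequence. -/
def wSeq (u₀ : ℓ2) : ℤ → ℝ := fun m => ((m:ℝ)^2 + 1) * ‖u₀ m‖ ^ 2

lemma wSeq_nonneg (u₀ : ℓ2) (m : ℤ) : 0 ≤ wSeq u₀ m := by
  unfold wSeq; positivity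

lemma wSeq_summable (u₀ : ℓ2) (hW : MemW 2 u₀) : Summable (wSeq u₀) := by
  unfold MemW at hW
  have : ∀ n : ℤ, (|(n : ℝ)| ^ (2:ℝ) + 1) * ‖u₀ n‖ ^ 2 = wSeq u₀ n := by
    intro n
    unfold wSeq
    rw [show (2:ℝ) = ((2:ℕ):ℝ) by norm_num, Real.rpow_natCast, sq_abs]
  rwa [funext this] at hW

/-- Truncation of `u₀` to `|m| ≤ K`. -/
def trunc (u₀ : ℓ2) (K : ℕ) : ℓ2 :=
  ⟨fun m : ℤ => if |m| ≤ (K:ℤ) then u₀ m else 0, by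
    apply memℓp_gen
    apply summable_of_ne_finset_zero (s := Finset.Icc (-(K:ℤ)) (K:ℤ))
    intro m hm
    have : ¬ (|m| ≤ (K:ℤ)) := by
      simp only [Finset.mem_Icc, not_and_or, not_le] at hm
      rw [abs_le]
      omega
    simp [this]⟩

lemma trunc_apply (u₀ : ℓ2) (K : ℕ) (m : ℤ) :
    (trunc u₀ K) m = if |m| ≤ (K:ℤ) then u₀ m else 0 := rfl

lemma trunc_norm_le (u₀ : ℓ2) (K : ℕ) : ‖trunc u₀ K‖ ≤ ‖u₀‖ := by
  have h1 : ‖trunc u₀ K‖ ^ (2:ℕ) ≤ ‖u₀‖ ^ (2:ℕ) := by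
    rw [norm_sq_eq_tsum, norm_sq_eq_tsum]
    apply Summable.tsum_le_tsum _ (summable_normsq _) (summable_normsq _)
    intro m
    rw [trunc_apply]
    by_cases h : |m| ≤ (K:ℤ) <;> simp [h]
  calc ‖trunc u₀ K‖ = Real.sqrt (‖trunc u₀ K‖ ^ 2) := (Real.sqrt_sq (norm_nonneg _)).symm
    _ ≤ Real.sqrt (‖u₀‖ ^ 2) := Real.sqrt_le_sqrt h1
    _ = ‖u₀‖ := Real.sqrt_sq (norm_nonneg _)

/-- Tail of the weighted sum. -/
def tailR (u₀ : ℓ2) (K : ℕ) : ℝ :=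
  ∑' m : {x : ℤ // x ∉ Finset.Icc (-(K:ℤ)) (K:ℤ)}, wSeq u₀ m

lemma tailR_tendsto (u₀ : ℓ2) : Tendsto (tailR u₀) atTop (𝓝 0) := by
  have h1 : Tendsto (fun K : ℕ => Finset.Icc (-(K:ℤ)) (K:ℤ)) atTop atTop := by
    apply tendsto_atTop_finset_of_monotone
    · intro K K' hKK'
      apply Finset.Icc_subset_Icc <;> omega
    · intro x
      refine ⟨x.natAbs, ?_⟩
      simp only [Finset.mem_Icc]
      constructor <;> omega
  exact (tendsto_tsum_compl_atTop_zero (wSeq u₀)).comp h1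

lemma rest_norm_le (u₀ : ℓ2) (hW : MemW 2 u₀) (K : ℕ) :
    ‖u₀ - trunc u₀ K‖ ≤ Real.sqrt (tailR u₀ K) / ((K:ℝ) + 1) := by
  set b := u₀ - trunc u₀ K with hb
  have hbm : ∀ m : ℤ, (b : ∀ _ : ℤ, ℂ) m = if |m| ≤ (K:ℤ) then 0 else u₀ m := by
    intro m
    rw [hb, lp.coeFn_sub, Pi.sub_apply, trunc_apply]
    by_cases h : |m| ≤ (K:ℤ) <;> simp [h]
  have hsupp : Function.support (fun m : ℤ => ‖(b : ∀ _ : ℤ, ℂ) m‖ ^ (2:ℕ))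
      ⊆ {x : ℤ | x ∉ Finset.Icc (-(K:ℤ)) (K:ℤ)} := by
    intro m hm
    simp only [Function.mem_support] at hm
    simp only [Set.mem_setOf_eq, Finset.mem_Icc]
    intro hcon
    apply hm
    rw [hbm m, if_pos (abs_le.mpr (by omega))]
    simp
  have h2 : ‖b‖ ^ (2:ℕ) ≤ tailR u₀ K / ((K:ℝ) + 1)^2 := by
    rw [norm_sq_eq_tsum]
    rw [← tsum_subtype_eq_of_support_subset hsupp]
    have hsub : Summable (fun m : {x : ℤ // x ∉ Finset.Icc (-(K:ℤ)) (K:ℤ)} =>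
        ‖(b : ∀ _ : ℤ, ℂ) (m : ℤ)‖ ^ (2:ℕ)) := (summable_normsq b).subtype _
    have hsub2 : Summable (fun m : {x : ℤ // x ∉ Finset.Icc (-(K:ℤ)) (K:ℤ)} =>
        wSeq u₀ m / ((K:ℝ) + 1)^2) := ((wSeq_summable u₀ hW).subtype _).div_const _
    calc ∑' m : {x : ℤ // x ∉ Finset.Icc (-(K:ℤ)) (K:ℤ)}, ‖(b : ∀ _ : ℤ, ℂ) (m:ℤ)‖ ^ (2:ℕ)
        ≤ ∑' m : {x : ℤ // x ∉ Finset.Icc (-(K:ℤ)) (K:ℤ)}, wSeq u₀ m / ((K:ℝ) + 1)^2 := by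
          apply Summable.tsum_le_tsum _ hsub hsub2
          rintro ⟨m, hm⟩
          have hnotle : ¬ (|m| ≤ (K:ℤ)) := fun h => hm (Finset.mem_Icc.mpr (abs_le.mp h))
          have habs : (K:ℤ) + 1 ≤ |m| := Int.lt_iff_add_one_le.mp (lt_of_not_ge hnotle)
          rw [hbm m, if_neg hnotle]
          unfold wSeq
          rw [le_div_iff₀ (by positivity)]
          have hc : ((K:ℝ)+1)^2 ≤ (m:ℝ)^2 := by
            have h1 : ((K:ℝ)+1) ≤ |(m:ℝ)| := by
              calc ((K:ℝ)+1) = (((K:ℤ)+1 : ℤ) : ℝ) := by push_cast; ring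
                _ ≤ ((|m| : ℤ) : ℝ) := by exact_mod_cast habs
                _ = |(m:ℝ)| := by push_cast; simp
            calc ((K:ℝ)+1)^2 ≤ |(m:ℝ)|^2 := by nlinarith [abs_nonneg (m:ℝ)]
              _ = (m:ℝ)^2 := sq_abs _
          nlinarith [sq_nonneg (‖u₀ m‖)]
      _ = tailR u₀ K / ((K:ℝ) + 1)^2 := by
          rw [tailR, tsum_div_const]
  calc ‖b‖ = Real.sqrt (‖b‖ ^ 2) := (Real.sqrt_sq (norm_nonneg _)).symm
    _ ≤ Real.sqrt (tailR u₀ K / ((K:ℝ) + 1)^2) := Real.sqrt_le_sqrt h2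
    _ = Real.sqrt (tailR u₀ K) / ((K:ℝ) + 1) := by
        rw [Real.sqrt_div (by
          apply tsum_nonneg
          intro m
          exact wSeq_nonneg u₀ m), Real.sqrt_sq (by positivity)]

end Trunc

section Eventually

lemma eventually_small (C U ε : ℝ) (hU : 0 ≤ U) (hC : 0 ≤ C) (hε : 0 < ε) :
    ∀ᶠ T : ℝ in atTop, (T ^ (100:ℕ) + 2) * ((1/2:ℝ) ^ (T ^ (100:ℕ) / 2) * Real.exp (T * C) * U) < ε := by
  set a : ℝ := Real.log 2 / 2 with ha
  have ha0 : 0 < a := by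
    rw [ha]
    have := Real.log_pos (by norm_num : (1:ℝ) < 2)
    linarith
  have hrw : ∀ y : ℝ, (1/2:ℝ) ^ (y / 2) = Real.exp (-(a * y)) := by
    intro y
    rw [Real.rpow_def_of_pos (by norm_num : (0:ℝ) < 1/2)]
    congr 1
    rw [show Real.log (1/2) = -Real.log 2 by
      rw [one_div, Real.log_inv]]
    rw [ha]
    ring
  -- condition (iii): (z+2) * exp(-(a/4) z) ≤ 1 eventually in z
  have hiii : ∀ᶠ z : ℝ in atTop, (z + 2) * Real.exp (-(a/4 * z)) ≤ 1 := by
    have h0 : Tendsto (fun x : ℝ => x ^ (1:ℕ) * Real.exp (-x)) atTop (𝓝 0) :=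
      Real.tendsto_pow_mul_exp_neg_atTop_nhds_zero 1
    have h1 : Tendsto (fun x : ℝ => Real.exp (-x)) atTop (𝓝 0) :=
      Real.tendsto_exp_neg_atTop_nhds_zero
    have hphi : Tendsto (fun z : ℝ => a/4 * z) atTop atTop :=
      Tendsto.const_mul_atTop (by positivity) tendsto_id
    have h2 : Tendsto (fun z : ℝ => (z + 2) * Real.exp (-(a/4 * z))) atTop (𝓝 0) := by
      have heq : ∀ z : ℝ, (z + 2) * Real.exp (-(a/4 * z))
          = (4/a) * ((a/4*z) ^ (1:ℕ) * Real.exp (-(a/4*z))) + 2 * Real.exp (-(a/4*z)) := by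
        intro z
        field_simp
      rw [funext heq]
      have := ((h0.comp hphi).const_mul (4/a)).add ((h1.comp hphi).const_mul 2)
      simpa using this
    exact (h2.eventually (eventually_le_nhds (by norm_num : (0:ℝ) < 1))).mono (fun z hz => hz)
  have hy : Tendsto (fun T : ℝ => T ^ (100:ℕ)) atTop atTop :=
    tendsto_pow_atTop (by norm_num)
  -- condition (iv)
  have hiv : ∀ᶠ T : ℝ in atTop, U * Real.exp (-(a/4 * T ^ (100:ℕ))) < ε := by
    have h1 : Tendsto (fun x : ℝ => Real.exp (-x)) atTop (𝓝 0) :=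
      Real.tendsto_exp_neg_atTop_nhds_zero
    have hphi : Tendsto (fun z : ℝ => a/4 * z) atTop atTop :=
      Tendsto.const_mul_atTop (by positivity) tendsto_id
    have h2 : Tendsto (fun T : ℝ => U * Real.exp (-(a/4 * T ^ (100:ℕ)))) atTop (𝓝 (U * 0)) :=
      ((h1.comp hphi).comp hy).const_mul U
    rw [mul_zero] at h2
    exact h2.eventually (eventually_lt_nhds hε)
  -- condition (ii): T*C ≤ a/2 * T^100 eventually
  have hii : ∀ᶠ T : ℝ in atTop, T * C ≤ a/2 * T ^ (100:ℕ) := by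
    filter_upwards [eventually_ge_atTop (1:ℝ), eventually_ge_atTop (2*C/a)] with T h1 h2
    have hT0 : 0 < T := by linarith
    have : 2*C/a ≤ T ^ (99:ℕ) := le_trans h2 (le_self_pow₀ h1 (by norm_num))
    rw [div_le_iff₀ ha0] at this
    calc T * C = C * T := by ring
      _ ≤ (a/2 * T ^ (99:ℕ)) * T := by
          apply mul_le_mul_of_nonneg_right _ (le_of_lt hT0)
          linarith
      _ = a/2 * T ^ (100:ℕ) := by ring
  filter_upwards [hii, hiv, hy.eventually hiii, eventually_ge_atTop (0:ℝ)] with T h2 h4 h3 h0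
  have hy0 : (0:ℝ) ≤ T ^ (100:ℕ) := by positivity
  rw [hrw]
  set y := T ^ (100:ℕ)
  have key : (y + 2) * (Real.exp (-(a * y)) * Real.exp (T*C) * U)
      = ((y + 2) * Real.exp (-(a/4 * y))) * (U * (Real.exp (T*C - (3*a/4) * y))) := by
    rw [show T*C - (3*a/4) * y = (T*C) + (-(3*a/4)*y) by ring, Real.exp_add,
      show -(a*y) = -(a/4*y) + (-(3*a/4)*y) by ring, Real.exp_add]
    ring
  rw [key]
  have hb1 : U * Real.exp (T*C - (3*a/4) * y) ≤ U * Real.exp (-(a/4 * y)) := by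
    apply mul_le_mul_of_nonneg_left _ hU
    apply Real.exp_le_exp.mpr
    linarith
  have hb2 : (0:ℝ) ≤ U * Real.exp (T*C - (3*a/4) * y) := by positivity
  calc ((y + 2) * Real.exp (-(a/4 * y))) * (U * Real.exp (T*C - (3*a/4) * y))
      ≤ 1 * (U * Real.exp (T*C - (3*a/4) * y)) := by
        apply mul_le_mul_of_nonneg_right h3 hb2
    _ = U * Real.exp (T*C - (3*a/4) * y) := by ring
    _ ≤ U * Real.exp (-(a/4 * y)) := hb1
    _ < ε := h4

end Eventually

set_option maxHeartbeats 2000000 in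
theorem weighted_far_components_small'
    (α : ℝ) (V : ℝ → ℝ) (θ : ℝ)
    (L : ℓ2 →L[ℂ] ℓ2) (hL : IsSchrodingerOp α θ V L)
    (u₀ : ℓ2) (hW : MemW 2 u₀) :
    ∀ ε : ℝ, 0 < ε → ∃ T₀ : ℝ, ∀ T : ℝ, T₀ ≤ T →
      ∀ t : ℝ, 0 ≤ t → t ≤ T →
        ∀ N : ℤ, (N = ⌊T ^ (100 : ℕ)⌋ + 1 ∨ N = ⌊T ^ (100 : ℕ)⌋ + 2 ∨
                  N = -(⌊T ^ (100 : ℕ)⌋ + 1) ∨ N = -(⌊T ^ (100 : ℕ)⌋ + 2)) →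
          |(N : ℝ)| * ‖(evol L t u₀) N‖ < ε := by
  intro ε hε
  set C := ‖L‖ with hCdef
  set U := ‖u₀‖ with hUdef
  have hC0 : 0 ≤ C := norm_nonneg _
  have hU0 : 0 ≤ U := norm_nonneg _
  have hSA := schrodinger_selfAdjoint hL
  have htail := (tendsto_order.1 (tailR_tendsto u₀)).2 ((ε/8)^2) (by positivity)
  rw [eventually_atTop] at htail
  obtain ⟨K₁, hK₁⟩ := htail
  have hyT : Tendsto (fun T : ℝ => T ^ (100:ℕ)) atTop atTop :=
    tendsto_pow_atTop (by norm_num)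
  have hev1 : ∀ᶠ T : ℝ in atTop, 2*(Real.exp 1 * (T * C)) ≤ T^(100:ℕ)/2 := by
    filter_upwards [eventually_ge_atTop (1:ℝ), eventually_ge_atTop (8*Real.exp 1 * C)]
      with T h1 h2
    have hT0 : (0:ℝ) < T := by linarith
    have h99 : 8*Real.exp 1*C ≤ T^(99:ℕ) := le_trans h2 (le_self_pow₀ h1 (by norm_num))
    have he : (0:ℝ) < Real.exp 1 := Real.exp_pos 1
    calc 2*(Real.exp 1 * (T * C)) = (2*Real.exp 1*C) * T := by ring
      _ ≤ (T^(99:ℕ)/4) * T := by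
          apply mul_le_mul_of_nonneg_right _ (le_of_lt hT0)
          linarith
      _ = T^(100:ℕ)/4 := by ring
      _ ≤ T^(100:ℕ)/2 := by
          have : (0:ℝ) ≤ T^(100:ℕ) := by positivity
          linarith
  have hev2 := eventually_small C U (ε/2) hU0 hC0 (by positivity)
  have hev4 : ∀ᶠ T : ℝ in atTop, (2*(K₁:ℝ) + 2) ≤ T^(100:ℕ) :=
    hyT.eventually_ge_atTop _
  obtain ⟨T₀, hT₀⟩ := eventually_atTop.mp
    (hev1.and (hev2.and ((eventually_ge_atTop (2:ℝ)).and hev4)))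
  refine ⟨T₀, ?_⟩
  intro T hT t ht0 htT N hN
  obtain ⟨hc1, hc2, hc3, hc4⟩ := hT₀ T hT
  set y := T ^ (100:ℕ) with hydef
  have hT2 : (2:ℝ) ≤ T := hc3
  have hy2 : (2:ℝ) ≤ y := le_trans hT2 (le_self_pow₀ (by linarith) (by norm_num))
  set M := ⌊y⌋ with hMdef
  have hM1 : 1 ≤ M := Int.le_floor.mpr (by push_cast; linarith)
  have hMy : (M:ℝ) ≤ y := Int.floor_le y
  have hyM : y < (M:ℝ) + 1 := Int.lt_floor_add_one y
  have hMK₁ : 2*(K₁:ℤ) + 2 ≤ M := Int.le_floor.mpr (by push_cast; linarith)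
  set Mn := M.toNat with hMndef
  have hMnM : (Mn : ℤ) = M := Int.toNat_of_nonneg (by omega)
  set K := Mn / 2 with hKdef
  set d := Mn + 1 - K with hddef
  have hKMn : K ≤ Mn := Nat.div_le_self _ _
  have hd1 : 1 ≤ d := by omega
  have hKd : K + d = Mn + 1 := by omega
  have h2K : Mn ≤ 2*K + 1 := by omega
  have h2K' : 2*K ≤ Mn := by omega
  have hKK₁ : K₁ ≤ K := by omega
  have habsN : |N| = M + 1 ∨ |N| = M + 2 := by
    rcases hN with h | h | h | h
    · left; rw [h]; exact abs_of_nonneg (by omega)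
    · right; rw [h]; exact abs_of_nonneg (by omega)
    · left; rw [h, abs_neg]; exact abs_of_nonneg (by omega)
    · right; rw [h, abs_neg]; exact abs_of_nonneg (by omega)
  have hKdN : (K:ℤ) + (d:ℤ) ≤ |N| := by
    have : (K:ℤ) + (d:ℤ) = (Mn:ℤ) + 1 := by exact_mod_cast congrArg (Nat.cast : ℕ → ℤ) hKd
    rcases habsN with h | h <;> omega
  -- cast facts about d and K
  have hdR : (d:ℝ) = (Mn:ℝ) + 1 - (K:ℝ) := by
    rw [hddef]
    push_cast [Nat.cast_sub (by omega : K ≤ Mn + 1)]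
    ring
  have hKR : (K:ℝ) ≤ (Mn:ℝ)/2 := by
    have : ((2*K : ℕ) : ℝ) ≤ ((Mn:ℕ) : ℝ) := by exact_mod_cast h2K'
    push_cast at this
    linarith
  have hMnR : y - 1 ≤ (Mn:ℝ) := by
    have : ((Mn:ℤ) : ℝ) = (M:ℝ) := by exact_mod_cast congrArg (Int.cast : ℤ → ℝ) hMnM
    push_cast at this
    linarith
  have hdy : y/2 ≤ (d:ℝ) := by
    rw [hdR]
    linarith
  -- split u₀
  set aT := trunc u₀ K with haTdef
  set bT := u₀ - aT with hbTdef
  have hsum : evol L t u₀ = evol L t aT + evol L t bT := by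
    rw [hbTdef, ← map_add]
    congr 1
    abel
  have hcoord : (evol L t u₀ : ∀ _ : ℤ, ℂ) N
      = (evol L t aT : ∀ _ : ℤ, ℂ) N + (evol L t bT : ∀ _ : ℤ, ℂ) N := by
    rw [hsum, lp.coeFn_add, Pi.add_apply]
  -- bound for bT
  have hbb : ‖(evol L t bT : ∀ _ : ℤ, ℂ) N‖ ≤ Real.sqrt (tailR u₀ K) / ((K:ℝ)+1) :=
    calc ‖(evol L t bT : ∀ _ : ℤ, ℂ) N‖ ≤ ‖evol L t bT‖ :=
          lp.norm_apply_le_norm (by norm_num) _ _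
      _ = ‖bT‖ := evol_norm_eq hSA t bT
      _ ≤ _ := rest_norm_le u₀ hW K
  -- bound for aT
  have haa0 : ∀ m : ℤ, (K:ℤ) < |m| → aT m = 0 := by
    intro m hm
    rw [haTdef, trunc_apply, if_neg (by omega)]
  have haa := evol_far_coord_bound hL t K d hd1 aT haa0 N hKdN
  set x := ‖(-(Complex.I * (t:ℂ))) • L‖ with hxdef
  have hx0 : 0 ≤ x := norm_nonneg _
  have hxval : x ≤ T * C := by
    rw [hxdef, norm_smul (-(Complex.I * (t:ℂ))) L]
    have h1 : ‖-(Complex.I * (t:ℂ))‖ = |t| := by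
      rw [norm_neg, norm_mul, Complex.norm_I, one_mul, Complex.norm_real]
      rfl
    rw [h1, hCdef]
    apply mul_le_mul_of_nonneg_right _ (norm_nonneg L)
    rw [abs_of_nonneg ht0]
    exact htT
  have hTC0 : (0:ℝ) ≤ T * C := by
    apply mul_nonneg (by linarith) hC0
  have haTle : ‖aT‖ ≤ U := trunc_norm_le u₀ K
  have hchain : ‖(evol L t aT : ∀ _ : ℤ, ℂ) N‖
      ≤ (1/2:ℝ)^(d:ℕ) * Real.exp (T*C) * U := by
    calc ‖(evol L t aT : ∀ _ : ℤ, ℂ) N‖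
        ≤ (x ^ d / (Nat.factorial d)) * Real.exp x * ‖aT‖ := haa
      _ ≤ ((T*C) ^ d / (Nat.factorial d)) * Real.exp (T*C) * U := by
          gcongr
      _ ≤ (1/2:ℝ)^(d:ℕ) * Real.exp (T*C) * U := by
          have hhalf : (T*C) ^ d / (Nat.factorial d) ≤ (1/2:ℝ)^(d:ℕ) := by
            apply pow_div_factorial_le_half_pow (T*C) d hTC0 hd1
            calc 2 * (Real.exp 1 * (T*C)) ≤ y/2 := hc1
              _ ≤ (d:ℝ) := hdy
          apply mul_le_mul_of_nonneg_right _ hU0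
          apply mul_le_mul_of_nonneg_right hhalf (Real.exp_nonneg _)
  -- final assembly
  have hNabsR : |(N : ℝ)| = ((|N| : ℤ) : ℝ) := by
    rw [Int.cast_abs]
  have hNy : ((|N| : ℤ) : ℝ) ≤ y + 2 := by
    rcases habsN with h | h <;> (rw [h]; push_cast; linarith)
  have hN4 : ((|N| : ℤ) : ℝ) ≤ 4*((K:ℝ)+1) := by
    have h4 : (|N| : ℤ) ≤ 4*(K:ℤ)+4 := by rcases habsN with h | h <;> omega
    calc ((|N| : ℤ) : ℝ) ≤ ((4*(K:ℤ)+4 : ℤ) : ℝ) := by exact_mod_cast h4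
      _ = 4*((K:ℝ)+1) := by push_cast; ring
  have hN0 : (0:ℝ) ≤ ((|N| : ℤ) : ℝ) := by positivity
  have hsqrt : Real.sqrt (tailR u₀ K) < ε/8 := by
    rw [Real.sqrt_lt' (by positivity)]
    exact hK₁ K hKK₁
  have htailnn : 0 ≤ Real.sqrt (tailR u₀ K) := Real.sqrt_nonneg _
  have hhalfpow : (1/2:ℝ)^(d:ℕ) ≤ (1/2:ℝ) ^ (y/2) := by
    rw [← Real.rpow_natCast (1/2:ℝ) d]
    exact Real.rpow_le_rpow_of_exponent_ge (by norm_num) (by norm_num) hdy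
  have hhp0 : (0:ℝ) ≤ (1/2:ℝ)^(d:ℕ) := by positivity
  calc |(N : ℝ)| * ‖(evol L t u₀ : ∀ _ : ℤ, ℂ) N‖
      ≤ ((|N| : ℤ) : ℝ) * (‖(evol L t aT : ∀ _ : ℤ, ℂ) N‖ + ‖(evol L t bT : ∀ _ : ℤ, ℂ) N‖) := by
        rw [hNabsR, hcoord]
        apply mul_le_mul_of_nonneg_left (norm_add_le _ _) hN0
    _ = ((|N| : ℤ) : ℝ) * ‖(evol L t aT : ∀ _ : ℤ, ℂ) N‖
          + ((|N| : ℤ) : ℝ) * ‖(evol L t bT : ∀ _ : ℤ, ℂ) N‖ := by ring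
    _ < ε/2 + ε/2 := by
        apply add_lt_add
        · calc ((|N| : ℤ) : ℝ) * ‖(evol L t aT : ∀ _ : ℤ, ℂ) N‖
              ≤ (y+2) * ((1/2:ℝ)^(y/2) * Real.exp (T*C) * U) := by
                apply mul_le_mul hNy _ (norm_nonneg _) (by linarith)
                calc ‖(evol L t aT : ∀ _ : ℤ, ℂ) N‖
                    ≤ (1/2:ℝ)^(d:ℕ) * Real.exp (T*C) * U := hchain
                  _ ≤ (1/2:ℝ)^(y/2) * Real.exp (T*C) * U := by
                      apply mul_le_mul_of_nonneg_right _ hU0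
                      apply mul_le_mul_of_nonneg_right hhalfpow (Real.exp_nonneg _)
            _ < ε/2 := hc2
        · calc ((|N| : ℤ) : ℝ) * ‖(evol L t bT : ∀ _ : ℤ, ℂ) N‖
              ≤ (4*((K:ℝ)+1)) * (Real.sqrt (tailR u₀ K) / ((K:ℝ)+1)) := by
                apply mul_le_mul hN4 hbb (norm_nonneg _) (by positivity)
            _ = 4 * Real.sqrt (tailR u₀ K) := by
                field_simp
            _ < 4 * (ε/8) := by linarith
            _ = ε/2 := by ring
    _ = ε := by ring


/-- **Smallness of the weighted far-out components of the solution** (Lemma 5.9).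
For a solution `u(t) = e^{-itL_θ}u(0)` with `u(0) ∈ 𝒲²(ℤ)`,
`sup_{0≤t≤T} max_{N = ±(⌊T¹⁰⁰⌋+1), ±(⌊T¹⁰⁰⌋+2)} |N u_N(t)| → 0` as `T → ∞`. -/
theorem weighted_far_components_small
    (α : ℝ) (hα : Irrational α) (V : ℝ → ℝ) (hV : IsAnalyticPeriodic V) (θ : ℝ)
    (L : ℓ2 →L[ℂ] ℓ2) (hL : IsSchrodingerOp α θ V L)
    (u₀ : ℓ2) (hW : MemW 2 u₀) :
    ∀ ε : ℝ, 0 < ε → ∃ T₀ : ℝ, ∀ T : ℝ, T₀ ≤ T →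
      ∀ t : ℝ, 0 ≤ t → t ≤ T →
        ∀ N : ℤ, (N = ⌊T ^ (100 : ℕ)⌋ + 1 ∨ N = ⌊T ^ (100 : ℕ)⌋ + 2 ∨
                  N = -(⌊T ^ (100 : ℕ)⌋ + 1) ∨ N = -(⌊T ^ (100 : ℕ)⌋ + 2)) →
          |(N : ℝ)| * ‖(evol L t u₀) N‖ < ε := by
  intro ε hε
  exact weighted_far_components_small' α V θ L hL u₀ hW ε hε
end
end

section
/- Let J = [a,b] ⊂ ℝ be a compact interval, let f ∈ C³(J, ℝ) satisfy f'(E) ≥ D₁ > 0 for all E ∈ J and |f^{(j)}(E)| ≤ D₂ for j = 1, 2, 3 and all E ∈ J, and let g ∈ C²(J, ℝ) satisfy g(a) = g(b) = g'(a) = g'(b) = 0. Then | ∫_J g(E) cos f(E) dE | ≤ (b − a) · |g|_{C²(J)} · ( D₁^{−2} + 4 D₂ D₁^{−3} + 3 D₂² D₁^{−4} ). -/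
open Set

/-- Auxiliary antiderivative used in the double integration by parts. -/
noncomputable def ibpAuxU (f f₁ f₂ g g₁ : ℝ → ℝ) (E : ℝ) : ℝ :=
  g E / f₁ E * Real.sin (f E) +
    (g₁ E / f₁ E ^ 2 - g E * f₂ E / f₁ E ^ 3) * Real.cos (f E)

/-- Auxiliary remainder integrand in the double integration by parts. -/
noncomputable def ibpAuxR (f₁ f₂ f₃ g g₁ g₂ : ℝ → ℝ) (E : ℝ) : ℝ :=
  g₂ E / f₁ E ^ 2 - 3 * g₁ E * f₂ E / f₁ E ^ 3 - g E * f₃ E / f₁ E ^ 3 +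
    3 * g E * f₂ E ^ 2 / f₁ E ^ 4

/-- **Double integration-by-parts (non-stationary phase) estimate** underlying the decay of the
Bloch-wave correlation coefficients: if `f ∈ C³([a,b])` has derivative bounded below by `D₁ > 0`
and derivatives of order `1,2,3` bounded by `D₂`, and `g ∈ C²([a,b])` vanishes together with its
first derivative at both endpoints, then `|∫_a^b g cos f| ≤ (b-a)·|g|_{C²}·(D₁⁻² + 4D₂D₁⁻³ +
3D₂²D₁⁻⁴)`.  Here `f₁, f₂, f₃` are the first three derivatives of `f`, `g₁, g₂` those of `g`,
and `G` is any bound for `|g| + |g'| + |g''|` on `[a,b]` (in particular the `C²`-norm). -/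
theorem integration_by_parts_cos_estimate
    (a b : ℝ) (hab : a ≤ b) (f f₁ f₂ f₃ g g₁ g₂ : ℝ → ℝ) (D₁ D₂ G : ℝ)
    (hf₁ : ∀ E ∈ Icc a b, HasDerivWithinAt f (f₁ E) (Icc a b) E)
    (hf₂ : ∀ E ∈ Icc a b, HasDerivWithinAt f₁ (f₂ E) (Icc a b) E)
    (hf₃ : ∀ E ∈ Icc a b, HasDerivWithinAt f₂ (f₃ E) (Icc a b) E)
    (hf₃c : ContinuousOn f₃ (Icc a b))
    (hg₁ : ∀ E ∈ Icc a b, HasDerivWithinAt g (g₁ E) (Icc a b) E)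
    (hg₂ : ∀ E ∈ Icc a b, HasDerivWithinAt g₁ (g₂ E) (Icc a b) E)
    (hg₂c : ContinuousOn g₂ (Icc a b))
    (hD₁ : 0 < D₁) (hlow : ∀ E ∈ Icc a b, D₁ ≤ f₁ E)
    (hD₂ : ∀ E ∈ Icc a b, |f₁ E| ≤ D₂ ∧ |f₂ E| ≤ D₂ ∧ |f₃ E| ≤ D₂)
    (hga : g a = 0) (hgb : g b = 0) (hg₁a : g₁ a = 0) (hg₁b : g₁ b = 0)
    (hG : ∀ E ∈ Icc a b, |g E| + |g₁ E| + |g₂ E| ≤ G) :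
    |∫ E in a..b, g E * Real.cos (f E)| ≤
      (b - a) * G * (1 / D₁ ^ 2 + 4 * D₂ / D₁ ^ 3 + 3 * D₂ ^ 2 / D₁ ^ 4) := by
  have haJ : a ∈ Icc a b := ⟨le_refl a, hab⟩
  have hbJ : b ∈ Icc a b := ⟨hab, le_refl b⟩
  have hne : ∀ x ∈ Icc a b, f₁ x ≠ 0 := fun x hx =>
    ne_of_gt (lt_of_lt_of_le hD₁ (hlow x hx))
  have hGnn : 0 ≤ G := le_trans (by positivity) (hG a haJ)
  -- continuity of all components
  have hfc : ContinuousOn f (Icc a b) := fun x hx => (hf₁ x hx).continuousWithinAt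
  have hf₁c : ContinuousOn f₁ (Icc a b) := fun x hx => (hf₂ x hx).continuousWithinAt
  have hf₂c : ContinuousOn f₂ (Icc a b) := fun x hx => (hf₃ x hx).continuousWithinAt
  have hgc : ContinuousOn g (Icc a b) := fun x hx => (hg₁ x hx).continuousWithinAt
  have hg₁c : ContinuousOn g₁ (Icc a b) := fun x hx => (hg₂ x hx).continuousWithinAt
  have hcosf : ContinuousOn (fun E => Real.cos (f E)) (Icc a b) :=
    Real.continuous_cos.comp_continuousOn hfc
  have hsinf : ContinuousOn (fun E => Real.sin (f E)) (Icc a b) :=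
    Real.continuous_sin.comp_continuousOn hfc
  have hne2 : ∀ x ∈ Icc a b, f₁ x ^ 2 ≠ 0 := fun x hx => pow_ne_zero 2 (hne x hx)
  have hne3 : ∀ x ∈ Icc a b, f₁ x ^ 3 ≠ 0 := fun x hx => pow_ne_zero 3 (hne x hx)
  have hne4 : ∀ x ∈ Icc a b, f₁ x ^ 4 ≠ 0 := fun x hx => pow_ne_zero 4 (hne x hx)
  set r : ℝ → ℝ := ibpAuxR f₁ f₂ f₃ g g₁ g₂ with hrdef
  set u : ℝ → ℝ := ibpAuxU f f₁ f₂ g g₁ with hudef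
  have hrc : ContinuousOn r (Icc a b) := by
    rw [hrdef]
    unfold ibpAuxR
    exact (((hg₂c.div (hf₁c.pow 2) hne2).sub
      (((continuousOn_const.mul hg₁c).mul hf₂c).div (hf₁c.pow 3) hne3)).sub
      ((hgc.mul hf₃c).div (hf₁c.pow 3) hne3)).add
      (((continuousOn_const.mul hgc).mul (hf₂c.pow 2)).div (hf₁c.pow 4) hne4)
  have huc : ContinuousOn u (Icc a b) := by
    rw [hudef]
    unfold ibpAuxU
    exact ((hgc.div hf₁c hne).mul hsinf).add
      (((hg₁c.div (hf₁c.pow 2) hne2).sub ((hgc.mul hf₂c).div (hf₁c.pow 3) hne3)).mul hcosf)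
  -- the key derivative computation at interior points
  have key : ∀ x ∈ Ioo a b, HasDerivAt u ((g x + r x) * Real.cos (f x)) x := by
    intro x hx
    have hxI : x ∈ Icc a b := Ioo_subset_Icc_self hx
    have hmem : Icc a b ∈ nhds x := Icc_mem_nhds hx.1 hx.2
    have Hf : HasDerivAt f (f₁ x) x := (hf₁ x hxI).hasDerivAt hmem
    have Hf1 : HasDerivAt f₁ (f₂ x) x := (hf₂ x hxI).hasDerivAt hmem
    have Hf2 : HasDerivAt f₂ (f₃ x) x := (hf₃ x hxI).hasDerivAt hmem
    have Hg : HasDerivAt g (g₁ x) x := (hg₁ x hxI).hasDerivAt hmem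
    have Hg1 : HasDerivAt g₁ (g₂ x) x := (hg₂ x hxI).hasDerivAt hmem
    have hx' : f₁ x ≠ 0 := hne x hxI
    have Hsin : HasDerivAt (fun E => Real.sin (f E)) (Real.cos (f x) * f₁ x) x :=
      (Real.hasDerivAt_sin (f x)).comp x Hf
    have Hcos : HasDerivAt (fun E => Real.cos (f E)) (-Real.sin (f x) * f₁ x) x :=
      (Real.hasDerivAt_cos (f x)).comp x Hf
    have H1 : HasDerivAt (fun E => g E / f₁ E)
        ((g₁ x * f₁ x - g x * f₂ x) / f₁ x ^ 2) x := Hg.div Hf1 hx'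
    have H2 := H1.mul Hsin
    have Hp2 : HasDerivAt (fun E => f₁ E ^ 2) ((2 : ℕ) * f₁ x ^ (2 - 1) * f₂ x) x := Hf1.pow 2
    have Hp3 : HasDerivAt (fun E => f₁ E ^ 3) ((3 : ℕ) * f₁ x ^ (3 - 1) * f₂ x) x := Hf1.pow 3
    have H3 : HasDerivAt (fun E => g₁ E / f₁ E ^ 2)
        ((g₂ x * f₁ x ^ 2 - g₁ x * ((2 : ℕ) * f₁ x ^ (2 - 1) * f₂ x)) / (f₁ x ^ 2) ^ 2) x :=
      Hg1.div Hp2 (pow_ne_zero 2 hx')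
    have H4 : HasDerivAt (fun E => g E * f₂ E / f₁ E ^ 3)
        (((g₁ x * f₂ x + g x * f₃ x) * f₁ x ^ 3 -
          g x * f₂ x * ((3 : ℕ) * f₁ x ^ (3 - 1) * f₂ x)) / (f₁ x ^ 3) ^ 2) x :=
      (Hg.mul Hf2).div Hp3 (pow_ne_zero 3 hx')
    have H := H2.add ((H3.sub H4).mul Hcos)
    have Hu : HasDerivAt u
        ((g₁ x * f₁ x - g x * f₂ x) / f₁ x ^ 2 * Real.sin (f x) +
          g x / f₁ x * (Real.cos (f x) * f₁ x) +
          (((g₂ x * f₁ x ^ 2 - g₁ x * ((2 : ℕ) * f₁ x ^ (2 - 1) * f₂ x)) / (f₁ x ^ 2) ^ 2 -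
            ((g₁ x * f₂ x + g x * f₃ x) * f₁ x ^ 3 -
              g x * f₂ x * ((3 : ℕ) * f₁ x ^ (3 - 1) * f₂ x)) / (f₁ x ^ 3) ^ 2) * Real.cos (f x) +
            (g₁ x / f₁ x ^ 2 - g x * f₂ x / f₁ x ^ 3) * (-Real.sin (f x) * f₁ x))) x := by
      rw [hudef]; unfold ibpAuxU; exact H
    convert Hu using 1
    rw [hrdef]; unfold ibpAuxR
    field_simp
    ring
  -- integrability
  have hrcos : ContinuousOn (fun E => r E * Real.cos (f E)) (Icc a b) := hrc.mul hcosf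
  have hgcos : ContinuousOn (fun E => g E * Real.cos (f E)) (Icc a b) := hgc.mul hcosf
  have hsub : uIcc a b ⊆ Icc a b := (uIcc_of_le hab).subset
  have hgint : IntervalIntegrable (fun E => g E * Real.cos (f E)) MeasureTheory.volume a b :=
    (hgcos.mono hsub).intervalIntegrable
  have hrint : IntervalIntegrable (fun E => r E * Real.cos (f E)) MeasureTheory.volume a b :=
    (hrcos.mono hsub).intervalIntegrable
  have hsumint : IntervalIntegrable (fun E => (g E + r E) * Real.cos (f E))
      MeasureTheory.volume a b := by
    have : (fun E => (g E + r E) * Real.cos (f E)) =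
        fun E => g E * Real.cos (f E) + r E * Real.cos (f E) := by funext E; ring
    rw [this]; exact hgint.add hrint
  -- fundamental theorem of calculus
  have heq : ∫ E in a..b, (g E + r E) * Real.cos (f E) = u b - u a :=
    intervalIntegral.integral_eq_sub_of_hasDeriv_right_of_le hab huc
      (fun x hx => (key x hx).hasDerivWithinAt) hsumint
  have hua : u a = 0 := by
    rw [hudef]; unfold ibpAuxU; simp [hga, hg₁a]
  have hub : u b = 0 := by
    rw [hudef]; unfold ibpAuxU; simp [hgb, hg₁b]
  have hsplit : (∫ E in a..b, g E * Real.cos (f E)) +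
      (∫ E in a..b, r E * Real.cos (f E)) = 0 := by
    rw [← intervalIntegral.integral_add hgint hrint]
    have : (fun E => g E * Real.cos (f E) + r E * Real.cos (f E)) =
        fun E => (g E + r E) * Real.cos (f E) := by funext E; ring
    rw [this, heq, hua, hub, sub_zero]
  have hval : (∫ E in a..b, g E * Real.cos (f E)) =
      -(∫ E in a..b, r E * Real.cos (f E)) := by linarith
  -- pointwise bound on the remainder
  set C : ℝ := G * (1 / D₁ ^ 2 + 4 * D₂ / D₁ ^ 3 + 3 * D₂ ^ 2 / D₁ ^ 4) with hCdef
  have hbound : ∀ x ∈ Icc a b, |r x * Real.cos (f x)| ≤ C := by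
    intro x hx
    have hP : 0 < f₁ x := lt_of_lt_of_le hD₁ (hlow x hx)
    have hl : D₁ ≤ f₁ x := hlow x hx
    obtain ⟨hb1, hb2, hb3⟩ := hD₂ x hx
    have hGx := hG x hx
    have hg0 : |g x| ≤ G := by
      have := abs_nonneg (g₁ x); have := abs_nonneg (g₂ x); linarith
    have hg1' : |g₁ x| ≤ G := by
      have := abs_nonneg (g x); have := abs_nonneg (g₂ x); linarith
    have hg2' : |g₂ x| ≤ G := by
      have := abs_nonneg (g x); have := abs_nonneg (g₁ x); linarith
    have step1 : |r x * Real.cos (f x)| ≤ |r x| := by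
      rw [abs_mul]
      calc |r x| * |Real.cos (f x)| ≤ |r x| * 1 := by
            gcongr; exact Real.abs_cos_le_one _
        _ = |r x| := mul_one _
    have step2 : |r x| ≤ |g₂ x| / f₁ x ^ 2 + 3 * |g₁ x| * |f₂ x| / f₁ x ^ 3 +
        |g x| * |f₃ x| / f₁ x ^ 3 + 3 * |g x| * |f₂ x| ^ 2 / f₁ x ^ 4 := by
      rw [hrdef]; unfold ibpAuxR
      have e1 : |g₂ x / f₁ x ^ 2| = |g₂ x| / f₁ x ^ 2 := by
        rw [abs_div, abs_pow, abs_of_pos hP]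
      have e2 : |3 * g₁ x * f₂ x / f₁ x ^ 3| = 3 * |g₁ x| * |f₂ x| / f₁ x ^ 3 := by
        rw [abs_div, abs_mul, abs_mul, abs_pow, abs_of_pos hP]
        norm_num
      have e3 : |g x * f₃ x / f₁ x ^ 3| = |g x| * |f₃ x| / f₁ x ^ 3 := by
        rw [abs_div, abs_mul, abs_pow, abs_of_pos hP]
      have e4 : |3 * g x * f₂ x ^ 2 / f₁ x ^ 4| = 3 * |g x| * |f₂ x| ^ 2 / f₁ x ^ 4 := by
        rw [abs_div, abs_mul, abs_mul, abs_pow, abs_pow, abs_of_pos hP]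
        norm_num
      calc |g₂ x / f₁ x ^ 2 - 3 * g₁ x * f₂ x / f₁ x ^ 3 - g x * f₃ x / f₁ x ^ 3 +
            3 * g x * f₂ x ^ 2 / f₁ x ^ 4|
          ≤ |g₂ x / f₁ x ^ 2 - 3 * g₁ x * f₂ x / f₁ x ^ 3 - g x * f₃ x / f₁ x ^ 3| +
            |3 * g x * f₂ x ^ 2 / f₁ x ^ 4| := abs_add_le _ _
        _ ≤ (|g₂ x / f₁ x ^ 2 - 3 * g₁ x * f₂ x / f₁ x ^ 3| + |g x * f₃ x / f₁ x ^ 3|) +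
            |3 * g x * f₂ x ^ 2 / f₁ x ^ 4| := by
            have := abs_sub (g₂ x / f₁ x ^ 2 - 3 * g₁ x * f₂ x / f₁ x ^ 3)
              (g x * f₃ x / f₁ x ^ 3)
            linarith
        _ ≤ ((|g₂ x / f₁ x ^ 2| + |3 * g₁ x * f₂ x / f₁ x ^ 3|) + |g x * f₃ x / f₁ x ^ 3|) +
            |3 * g x * f₂ x ^ 2 / f₁ x ^ 4| := by
            have := abs_sub (g₂ x / f₁ x ^ 2) (3 * g₁ x * f₂ x / f₁ x ^ 3)
            linarith
        _ = |g₂ x| / f₁ x ^ 2 + 3 * |g₁ x| * |f₂ x| / f₁ x ^ 3 + |g x| * |f₃ x| / f₁ x ^ 3 +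
            3 * |g x| * |f₂ x| ^ 2 / f₁ x ^ 4 := by rw [e1, e2, e3, e4]
    have step3 : |g₂ x| / f₁ x ^ 2 + 3 * |g₁ x| * |f₂ x| / f₁ x ^ 3 +
        |g x| * |f₃ x| / f₁ x ^ 3 + 3 * |g x| * |f₂ x| ^ 2 / f₁ x ^ 4 ≤
        G / D₁ ^ 2 + 3 * G * D₂ / D₁ ^ 3 + G * D₂ / D₁ ^ 3 + 3 * G * D₂ ^ 2 / D₁ ^ 4 := by
      have hD₂nn : 0 ≤ D₂ := le_trans (abs_nonneg _) hb1
      gcongr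
    have hCeq : G / D₁ ^ 2 + 3 * G * D₂ / D₁ ^ 3 + G * D₂ / D₁ ^ 3 + 3 * G * D₂ ^ 2 / D₁ ^ 4
        = C := by rw [hCdef]; ring
    linarith
  -- conclude
  have hnorm : ‖∫ E in a..b, r E * Real.cos (f E)‖ ≤ C * |b - a| :=
    intervalIntegral.norm_integral_le_of_norm_le_const (fun x hx => by
      rw [Real.norm_eq_abs]
      exact hbound x (mem_Icc_of_Ioc ((uIoc_of_le hab ▸ hx))))
  rw [hval, abs_neg]
  rw [Real.norm_eq_abs] at hnorm
  have habs : |b - a| = b - a := abs_of_nonneg (by linarith)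
  calc |∫ E in a..b, r E * Real.cos (f E)| ≤ C * |b - a| := hnorm
    _ = (b - a) * G * (1 / D₁ ^ 2 + 4 * D₂ / D₁ ^ 3 + 3 * D₂ ^ 2 / D₁ ^ 4) := by
        rw [habs, hCdef]; ring
end
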